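/- arXiv:2508.20005 — 6 statements merged into one kernel-verified Lean document; each statement's English description precedes it below -/
import Mathlib

section
/- Let (Γ_n) be a scale of an infinite residually finite group G and X = G_{(Γ_n)} the associated odometer. A homeomorphism f of X commutes with the left multiplication action of G (i.e., f(τ(g)x) = τ(g)f(x) for all g ∈ G, x ∈ X) if and only if there exists a ∈ X such that f(x) = xa^{-1} for all x ∈ X. Consequently, the automorphism group Aut(X,G)_L of the left odometer is isomorphic as a group to X itself. -/
open scoped Pointwise

noncomputable section
namespace OdoPaper


variable {G : Type*} [Group G]

/-- Each finite quotient carries the discrete topology. -/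
instance quotTop (Γ : Subgroup G) : TopologicalSpace (G ⧸ Γ) := ⊥
instance quotDisc (Γ : Subgroup G) : DiscreteTopology (G ⧸ Γ) := ⟨rfl⟩

/-- The natural projection between coset spaces of nested subgroups. -/
def projOfLE {H K : Subgroup G} (h : H ≤ K) : G ⧸ H → G ⧸ K :=
  Quotient.map' id fun a b hab => by
    rw [QuotientGroup.leftRel_apply] at hab ⊢
    exact h hab

/-- The odometer space for a (not necessarily normal) decreasing sequence of subgroups. -/
abbrev OdoSp (Γ : ℕ → Subgroup G) (hdec : ∀ n, Γ (n + 1) ≤ Γ n) : Type _ :=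
  {x : ∀ n, G ⧸ Γ n // ∀ n, projOfLE (hdec n) (x (n + 1)) = x n}

/-- The bonding homomorphisms for a decreasing sequence of normal subgroups. -/
def odoMap (Γ : ℕ → Subgroup G) [∀ n, (Γ n).Normal] (hdec : ∀ n, Γ (n + 1) ≤ Γ n) (n : ℕ) :
    G ⧸ Γ (n + 1) →* G ⧸ Γ n :=
  QuotientGroup.map _ _ (MonoidHom.id G) (hdec n)

/-- The odometer associated to a decreasing sequence of normal subgroups, as a subgroup of
the product of the finite quotients. -/
def Odo (Γ : ℕ → Subgroup G) [∀ n, (Γ n).Normal] (hdec : ∀ n, Γ (n + 1) ≤ Γ n) :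
    Subgroup (∀ n, G ⧸ Γ n) where
  carrier := {x | ∀ n, odoMap Γ hdec n (x (n + 1)) = x n}
  one_mem' := fun n => map_one _
  mul_mem' := fun {a b} ha hb n => by
    simp only [Pi.mul_apply, map_mul, ha n, hb n]
  inv_mem' := fun {a} ha n => by
    simp only [Pi.inv_apply, map_inv, ha n]

/-- The canonical homomorphism from `G` to its odometer. -/
def tau (Γ : ℕ → Subgroup G) [∀ n, (Γ n).Normal] (hdec : ∀ n, Γ (n + 1) ≤ Γ n) :
    G →* Odo Γ hdec where
  toFun g := ⟨fun n => QuotientGroup.mk g, fun n => rfl⟩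
  map_one' := rfl
  map_mul' g₁ g₂ := rfl

/-- Cylinder set of level `n` through the coset `a`. -/
def cyl (Γ : ℕ → Subgroup G) [∀ n, (Γ n).Normal] (hdec : ∀ n, Γ (n + 1) ≤ Γ n) (n : ℕ)
    (a : G ⧸ Γ n) : Set (Odo Γ hdec) :=
  {x | (x : ∀ k, G ⧸ Γ k) n = a}

/-- The metric on the odometer: `d(x,y) = 2^{-min{n : xₙ ≠ yₙ}}`. -/
def odoDist {Γ : ℕ → Subgroup G} [∀ n, (Γ n).Normal] {hdec : ∀ n, Γ (n + 1) ≤ Γ n}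
    (x y : Odo Γ hdec) : ℝ :=
  letI := Classical.dec (x = y)
  if x = y then 0
  else (1 / 2 : ℝ) ^ sInf {n : ℕ | (x : ∀ k, G ⧸ Γ k) n ≠ (y : ∀ k, G ⧸ Γ k) n}



/-- The group of self-homeomorphisms of a space, with `(f * g) x = f (g x)`. -/
instance homeoGroup (X : Type*) [TopologicalSpace X] : Group (X ≃ₜ X) where
  mul f g := g.trans f
  one := Homeomorph.refl X
  inv := Homeomorph.symm
  mul_assoc _ _ _ := Homeomorph.ext fun _ => rfl
  one_mul _ := Homeomorph.ext fun _ => rfl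
  mul_one _ := Homeomorph.ext fun _ => rfl
  inv_mul_cancel f := Homeomorph.ext fun x => f.symm_apply_apply x

theorem homeo_mul_apply {X : Type*} [TopologicalSpace X] (f g : X ≃ₜ X) (x : X) :
    (f * g) x = f (g x) := rfl

theorem homeo_inv_apply {X : Type*} [TopologicalSpace X] (f : X ≃ₜ X) (x : X) :
    f⁻¹ x = f.symm x := rfl

section Full

variable (X : Type*) [Group X] [TopologicalSpace X]

/-- Membership in the topological full group of the right translation action of `X`
on itself: on each piece of a finite clopen partition, `f` is a right translation. -/
def InFullR (f : X ≃ₜ X) : Prop :=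
  ∃ ξ : X → X, IsLocallyConstant ξ ∧ (Set.range ξ).Finite ∧ ∀ x, f x = x * (ξ x)⁻¹

/-- Membership in the topological full group of the left translation action. -/
def InFullL (f : X ≃ₜ X) : Prop :=
  ∃ ξ : X → X, IsLocallyConstant ξ ∧ (Set.range ξ).Finite ∧ ∀ x, f x = ξ x * x

/-- The topological full group `[[X]]_R` of the right translation action. -/
def TFGR : Subgroup (X ≃ₜ X) where
  carrier := {f | InFullR X f}
  one_mem' := ⟨fun _ => 1, IsLocallyConstant.const 1,
    (Set.finite_singleton 1).subset (Set.range_subset_iff.2 fun _ => rfl),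
    fun x => by simp [homeo_mul_apply]⟩
  mul_mem' := by
    rintro f g ⟨ξf, hf1, hf2, hf3⟩ ⟨ξg, hg1, hg2, hg3⟩
    refine ⟨fun x => ξf (g x) * ξg x,
      (hf1.comp_continuous g.continuous).mul hg1,
      (hf2.mul hg2).subset ?_, fun x => ?_⟩
    · rintro y ⟨x, rfl⟩
      exact Set.mul_mem_mul ⟨g x, rfl⟩ ⟨x, rfl⟩
    · show f (g x) = x * (ξf (g x) * ξg x)⁻¹
      rw [mul_inv_rev, ← mul_assoc, ← hg3 x, ← hf3 (g x)]
  inv_mem' := by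
    rintro f ⟨ξ, h1, h2, h3⟩
    refine ⟨fun x => (ξ (f.symm x))⁻¹,
      (h1.comp_continuous f.symm.continuous).inv, (h2.inv).subset ?_, fun x => ?_⟩
    · rintro y ⟨x, rfl⟩
      exact Set.inv_mem_inv.2 ⟨f.symm x, rfl⟩
    · have h := h3 (f.symm x)
      rw [f.apply_symm_apply] at h
      show f.symm x = x * ((ξ (f.symm x))⁻¹)⁻¹
      rw [inv_inv]
      exact (eq_mul_inv_iff_mul_eq.mp h).symm

/-- The topological full group `[[X]]_L` of the left translation action. -/
def TFGL : Subgroup (X ≃ₜ X) where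
  carrier := {f | InFullL X f}
  one_mem' := ⟨fun _ => 1, IsLocallyConstant.const 1,
    (Set.finite_singleton 1).subset (Set.range_subset_iff.2 fun _ => rfl),
    fun x => by simp⟩
  mul_mem' := by
    rintro f g ⟨ξf, hf1, hf2, hf3⟩ ⟨ξg, hg1, hg2, hg3⟩
    refine ⟨fun x => ξf (g x) * ξg x,
      (hf1.comp_continuous g.continuous).mul hg1,
      (hf2.mul hg2).subset ?_, fun x => ?_⟩
    · rintro y ⟨x, rfl⟩
      exact Set.mul_mem_mul ⟨g x, rfl⟩ ⟨x, rfl⟩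
    · show f (g x) = ξf (g x) * ξg x * x
      rw [mul_assoc, ← hg3 x, ← hf3 (g x)]
  inv_mem' := by
    rintro f ⟨ξ, h1, h2, h3⟩
    refine ⟨fun x => (ξ (f.symm x))⁻¹,
      (h1.comp_continuous f.symm.continuous).inv, (h2.inv).subset ?_, fun x => ?_⟩
    · rintro y ⟨x, rfl⟩
      exact Set.inv_mem_inv.2 ⟨f.symm x, rfl⟩
    · have h := h3 (f.symm x)
      rw [f.apply_symm_apply] at h
      show f.symm x = (ξ (f.symm x))⁻¹ * x
      exact eq_inv_mul_iff_mul_eq.mpr h.symm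

/-- `f` commutes with left translation by every element of `S`. -/
def IsAutLOn (S : Set X) (f : X ≃ₜ X) : Prop :=
  ∀ s ∈ S, ∀ x, f (s * x) = s * f x

theorem IsAutLOn.one (S : Set X) : IsAutLOn X S 1 := fun _ _ _ => rfl

theorem IsAutLOn.mul {S T : Set X} {f g : X ≃ₜ X} (hf : IsAutLOn X S f)
    (hg : IsAutLOn X T g) : IsAutLOn X (S ∩ T) (f * g) := fun s hs x => by
  rw [homeo_mul_apply, hg s hs.2, hf s hs.1, homeo_mul_apply]

theorem IsAutLOn.inv {S : Set X} {f : X ≃ₜ X} (hf : IsAutLOn X S f) :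
    IsAutLOn X S f⁻¹ := fun s hs x => by
  rw [homeo_inv_apply]
  have h := hf s hs (f.symm x)
  rw [f.apply_symm_apply] at h
  rw [← h, f.symm_apply_apply]
  rfl

/-- The group of automorphisms of the left translation action of `S ⊆ X` on `X`. -/
def AutLgrp (S : Set X) : Subgroup (X ≃ₜ X) where
  carrier := {f | IsAutLOn X S f}
  one_mem' := IsAutLOn.one X S
  mul_mem' := fun {f g} hf hg => by
    have := IsAutLOn.mul X (S := S) (T := S) hf hg
    simpa using this
  inv_mem' := fun {f} hf => IsAutLOn.inv X hf

end Full



section Stab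
variable (X : Type*) [Group X] [TopologicalSpace X]

/-- A (finitely additive) invariant mean: the classical definition of amenability for
(discrete) groups. -/
def IsAmenable (Γ : Type*) [Group Γ] : Prop :=
  ∃ m : Set Γ → ℝ, (∀ A, 0 ≤ m A) ∧ m Set.univ = 1 ∧
    (∀ A B, Disjoint A B → m (A ∪ B) = m A + m B) ∧
    ∀ (g : Γ) (A), m ((g * ·) '' A) = m A

/-- `C` is a minimal component for the left translation action of the subset `T ⊆ X`. -/
def IsMinCompL (T : Set X) (C : Set X) : Prop :=
  C.Nonempty ∧ IsClosed C ∧ (∀ t ∈ T, ∀ x ∈ C, t * x ∈ C) ∧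
    ∀ x ∈ C, C ⊆ closure ((· * x) '' T)

/-- The subgroup `[[X]]_{U,L}` of homeomorphisms acting as a left translation on each
left coset of `U`. -/
def fullUL (U : Subgroup X) : Subgroup (X ≃ₜ X) where
  carrier := {f | ∀ a : X, ∃ ξ : X, ∀ x : X,
    (QuotientGroup.mk x : X ⧸ U) = QuotientGroup.mk a → f x = ξ * x}
  one_mem' := fun a => ⟨1, fun x _ => (one_mul x).symm⟩
  mul_mem' := by
    intro f g hf hg a
    obtain ⟨ξg, hξg⟩ := hg a
    obtain ⟨ξf, hξf⟩ := hf (ξg * a)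
    refine ⟨ξf * ξg, fun x hx => ?_⟩
    have hx' : (QuotientGroup.mk (ξg * x) : X ⧸ U) = QuotientGroup.mk (ξg * a) := by
      rw [QuotientGroup.eq] at hx ⊢
      simpa [mul_assoc] using hx
    show f (g x) = ξf * ξg * x
    rw [hξg x hx, hξf (ξg * x) hx', mul_assoc]
  inv_mem' := by
    intro f hf a
    obtain ⟨ξ, hξ⟩ := hf (f.symm a)
    refine ⟨ξ⁻¹, fun x hx => ?_⟩
    have ha : f (f.symm a) = ξ * f.symm a := hξ _ rfl
    rw [f.apply_symm_apply] at ha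
    have hx' : (QuotientGroup.mk (ξ⁻¹ * x) : X ⧸ U) = QuotientGroup.mk (f.symm a) := by
      rw [QuotientGroup.eq] at hx ⊢
      have : f.symm a = ξ⁻¹ * a := eq_inv_mul_iff_mul_eq.mpr ha.symm
      rw [this]
      simpa [mul_assoc] using hx
    have := hξ (ξ⁻¹ * x) hx'
    rw [mul_inv_cancel_left] at this
    show f.symm x = ξ⁻¹ * x
    conv_lhs => rw [← this]
    rw [f.symm_apply_apply]
end Stab

section Full0
variable (X : Type*) [Group X] [TopologicalSpace X]

/-- The subgroup `[[X]]⁰_{U,L}` of elements of the topological full group preserving each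
left coset `aU` and acting on it by left multiplication by an element of `aUa⁻¹`. -/
def full0L (U : Subgroup X) : Subgroup (X ≃ₜ X) where
  carrier := {f | ∀ a : X, ∃ u ∈ U, ∀ x : X,
    (QuotientGroup.mk x : X ⧸ U) = QuotientGroup.mk a → f x = a * u * a⁻¹ * x}
  one_mem' := fun a => ⟨1, U.one_mem, fun x _ => by
    show x = a * 1 * a⁻¹ * x
    simp⟩
  mul_mem' := by
    intro f g hf hg a
    obtain ⟨ug, hugU, hg'⟩ := hg a
    obtain ⟨uf, hufU, hf'⟩ := hf a
    refine ⟨uf * ug, U.mul_mem hufU hugU, fun x hx => ?_⟩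
    have hgx : (QuotientGroup.mk (g x) : X ⧸ U) = QuotientGroup.mk a := by
      rw [hg' x hx]
      rw [QuotientGroup.eq] at hx ⊢
      have h : (a * ug * a⁻¹ * x)⁻¹ * a = x⁻¹ * a * ug⁻¹ := by group
      rw [h]
      exact U.mul_mem hx (U.inv_mem hugU)
    show f (g x) = a * (uf * ug) * a⁻¹ * x
    rw [hf' (g x) hgx, hg' x hx]
    group
  inv_mem' := by
    intro f hf a
    obtain ⟨u, huU, hu⟩ := hf a
    refine ⟨u⁻¹, U.inv_mem huU, fun x hx => ?_⟩
    have hx' : (QuotientGroup.mk (a * u⁻¹ * a⁻¹ * x) : X ⧸ U) = QuotientGroup.mk a := by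
      rw [QuotientGroup.eq] at hx ⊢
      have h : (a * u⁻¹ * a⁻¹ * x)⁻¹ * a = x⁻¹ * a * u := by group
      rw [h]
      exact U.mul_mem hx huU
    have h2 := hu _ hx'
    have h3 : f (a * u⁻¹ * a⁻¹ * x) = x := by rw [h2]; group
    show f.symm x = a * u⁻¹ * a⁻¹ * x
    conv_lhs => rw [← h3]
    rw [f.symm_apply_apply]

end Full0

section StabAut
variable {G : Type*} [Group G]

/-- The stabilized automorphism group of the (left) odometer: homeomorphisms commuting
with the left translation action of some finite-index subgroup of `G`. -/
def stabAut (Γ : ℕ → Subgroup G) [∀ n, (Γ n).Normal] (hdec : ∀ n, Γ (n + 1) ≤ Γ n) :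
    Subgroup (↥(Odo Γ hdec) ≃ₜ ↥(Odo Γ hdec)) where
  carrier := {f | ∃ H : Subgroup G, H.FiniteIndex ∧
    IsAutLOn _ (tau Γ hdec '' (H : Set G)) f}
  one_mem' := ⟨⊤, inferInstance, IsAutLOn.one _ _⟩
  mul_mem' := by
    rintro f g ⟨H₁, h₁, hf⟩ ⟨H₂, h₂, hg⟩
    haveI := h₁; haveI := h₂
    refine ⟨H₁ ⊓ H₂, inferInstance, ?_⟩
    rintro s ⟨γ, hγ, rfl⟩ x
    have hγ' := Subgroup.mem_inf.mp hγ
    rw [homeo_mul_apply, hg _ ⟨γ, hγ'.2, rfl⟩, hf _ ⟨γ, hγ'.1, rfl⟩, homeo_mul_apply]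
  inv_mem' := by
    rintro f ⟨H, h, hf⟩
    exact ⟨H, h, IsAutLOn.inv _ hf⟩

/-- The clopen subgroup `[1]_n` of the odometer (kernel of the projection to level `n`). -/
def levelKer (Γ : ℕ → Subgroup G) [∀ n, (Γ n).Normal] (hdec : ∀ n, Γ (n + 1) ≤ Γ n)
    (n : ℕ) : Subgroup ↥(Odo Γ hdec) :=
  ((Pi.evalMonoidHom (fun k => G ⧸ Γ k) n).comp (Odo Γ hdec).subtype).ker

end StabAut

section Adic

/-- The subgroups `m^n ℤ` of `ℤ`, multiplicatively. -/
def zmSub (m : ℕ) (n : ℕ) : Subgroup (Multiplicative ℤ) :=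
  Subgroup.closure {Multiplicative.ofAdd ((m : ℤ) ^ n)}

theorem zmdec (m : ℕ) : ∀ n, zmSub m (n + 1) ≤ zmSub m n := fun n => by
  rw [zmSub, Subgroup.closure_le]
  intro y hy
  rw [Set.mem_singleton_iff] at hy
  subst hy
  rw [SetLike.mem_coe, zmSub, Subgroup.mem_closure_singleton]
  refine ⟨(m : ℤ), ?_⟩
  rw [← ofAdd_zsmul]
  congr 1
  rw [smul_eq_mul, pow_succ]
  ring

/-- The `m`-adic odometer group `ℤ_m`, the inverse limit of `ℤ/m^nℤ`. -/
def Zm (m : ℕ) : Subgroup (∀ n, Multiplicative ℤ ⧸ zmSub m n) := Odo (zmSub m) (zmdec m)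

/-- The scale of `ℤ²` generated by `(p^n, 0)` and `(0, q^n)`, multiplicatively. -/
def zsqSub (p q : ℕ) (n : ℕ) : Subgroup (Multiplicative (ℤ × ℤ)) :=
  Subgroup.closure {Multiplicative.ofAdd ((((p : ℤ) ^ n, 0) : ℤ × ℤ)),
    Multiplicative.ofAdd ((((0 : ℤ), (q : ℤ) ^ n) : ℤ × ℤ))}

theorem zsqdec (p q : ℕ) : ∀ n, zsqSub p q (n + 1) ≤ zsqSub p q n := fun n => by
  rw [zsqSub, Subgroup.closure_le]
  intro y hy
  rw [Set.mem_insert_iff, Set.mem_singleton_iff] at hy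
  rcases hy with rfl | rfl
  · rw [SetLike.mem_coe]
    have h : (Multiplicative.ofAdd ((((p : ℤ) ^ n, 0) : ℤ × ℤ))) ^ ((p : ℕ) : ℤ) =
        Multiplicative.ofAdd ((((p : ℤ) ^ (n + 1), 0) : ℤ × ℤ)) := by
      rw [← ofAdd_zsmul]
      congr 1
      rw [Prod.smul_mk, smul_eq_mul, smul_eq_mul, pow_succ]
      simp [Prod.ext_iff]; ring
    rw [← h]
    exact Subgroup.zpow_mem _ (Subgroup.subset_closure (by simp [zsqSub])) _
  · rw [SetLike.mem_coe]
    have h : (Multiplicative.ofAdd ((((0 : ℤ), (q : ℤ) ^ n) : ℤ × ℤ))) ^ ((q : ℕ) : ℤ) =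
        Multiplicative.ofAdd ((((0 : ℤ), (q : ℤ) ^ (n + 1)) : ℤ × ℤ)) := by
      rw [← ofAdd_zsmul]
      congr 1
      rw [Prod.smul_mk, smul_eq_mul, smul_eq_mul, pow_succ]
      simp [Prod.ext_iff]; ring
    rw [← h]
    exact Subgroup.zpow_mem _ (Subgroup.subset_closure (by simp [zsqSub])) _

end Adic

/-- `C` is a minimal component of the action of the subgroup `H ≤ G` on `X` via `ρ`. -/
def IsMinCompAct {G X : Type*} [Group G] [TopologicalSpace X] (ρ : G →* (X ≃ₜ X))
    (H : Subgroup G) (C : Set X) : Prop :=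
  C.Nonempty ∧ IsClosed C ∧ (∀ h ∈ H, ∀ x ∈ C, ρ h x ∈ C) ∧
    ∀ x ∈ C, C ⊆ closure {y | ∃ h ∈ H, y = ρ h x}


section Aux

instance discTopGroup (H : Type*) [Group H] [TopologicalSpace H] [DiscreteTopology H] :
    IsTopologicalGroup H where
  continuous_mul := continuous_of_discreteTopology
  continuous_inv := continuous_of_discreteTopology

variable {G : Type*} [Group G] (Γ : ℕ → Subgroup G) [∀ n, (Γ n).Normal]
  (hdec : ∀ n, Γ (n + 1) ≤ Γ n)

theorem tau_denseRange : Dense (Set.range (tau Γ hdec) : Set ↥(Odo Γ hdec)) := by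
  rw [dense_iff_inter_open]
  rintro U hU ⟨x, hxU⟩
  obtain ⟨V, hV, rfl⟩ := isOpen_induced_iff.mp hU
  obtain ⟨I, u, h1, h2⟩ := isOpen_pi_iff.mp hV _ hxU
  obtain ⟨g, hg⟩ := QuotientGroup.mk_surjective ((x : ∀ k, G ⧸ Γ k) (I.sup id))
  have down : ∀ k, (x : ∀ k, G ⧸ Γ k) k = QuotientGroup.mk g →
      ∀ j ≤ k, (x : ∀ k, G ⧸ Γ k) j = QuotientGroup.mk g := by
    intro k
    induction k with
    | zero =>
      intro h j hj
      rw [Nat.le_zero.mp hj]; exact h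
    | succ k ih =>
      intro h j hj
      have hk : (x : ∀ k, G ⧸ Γ k) k = QuotientGroup.mk g := by
        have hx := x.2 k
        rw [← hx, h]
        rfl
      rcases eq_or_lt_of_le hj with rfl | h'
      · exact h
      · exact ih hk j (Nat.lt_succ_iff.mp h')
  refine ⟨tau Γ hdec g, ?_, ⟨g, rfl⟩⟩
  apply h2
  intro i hi
  show (tau Γ hdec g : ∀ k, G ⧸ Γ k) i ∈ u i
  have : (tau Γ hdec g : ∀ k, G ⧸ Γ k) i = (x : ∀ k, G ⧸ Γ k) i := by
    rw [down (I.sup id) hg.symm i (Finset.le_sup (f := id) hi)]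
    rfl
  rw [this]
  exact (h1 i hi).2

theorem commutes_eq (f : ↥(Odo Γ hdec) ≃ₜ ↥(Odo Γ hdec))
    (hf : ∀ (g : G) (x : ↥(Odo Γ hdec)), f (tau Γ hdec g * x) = tau Γ hdec g * f x)
    (x : ↥(Odo Γ hdec)) : f x = x * f 1 := by
  have h1 : Continuous fun x : ↥(Odo Γ hdec) => f x := f.continuous
  have h2 : Continuous fun x : ↥(Odo Γ hdec) => x * f 1 := continuous_mul_right _
  have heq : (fun x : ↥(Odo Γ hdec) => f x) = fun x => x * f 1 := by
    refine Continuous.ext_on (tau_denseRange Γ hdec) h1 h2 ?_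
    rintro y ⟨g, rfl⟩
    have := hf g 1
    simpa using this
  exact congrFun heq x

end Aux

/-- homeomorphisms commuting with the left `G`-action are exactly the right
translations; consequently `Aut(X,G)_L ≅ X`. -/
theorem stmt4 {G : Type*} [Group G] (Γ : ℕ → Subgroup G) [∀ n, (Γ n).Normal]
    [∀ n, (Γ n).FiniteIndex] (hdec : ∀ n, Γ (n + 1) ≤ Γ n)
    (htriv : ∀ g : G, (∀ n, g ∈ Γ n) → g = 1) [Infinite G] :
    (∀ f : ↥(Odo Γ hdec) ≃ₜ ↥(Odo Γ hdec),
        (∀ (g : G) (x : ↥(Odo Γ hdec)), f (tau Γ hdec g * x) = tau Γ hdec g * f x) ↔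
          ∃ a : ↥(Odo Γ hdec), ∀ x, f x = x * a⁻¹) ∧
    Nonempty (↥(AutLgrp ↥(Odo Γ hdec) (Set.range (tau Γ hdec))) ≃* ↥(Odo Γ hdec)) := by
  constructor
  · intro f
    constructor
    · intro hf
      refine ⟨(f 1)⁻¹, fun x => ?_⟩
      rw [commutes_eq Γ hdec f hf x, inv_inv]
    · rintro ⟨a, ha⟩ g x
      rw [ha, ha, mul_assoc]
  · have mem : ∀ a : ↥(Odo Γ hdec), Homeomorph.mulRight a⁻¹ ∈
        AutLgrp (↥(Odo Γ hdec)) (Set.range (tau Γ hdec)) := by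
      intro a s _ x
      show s * x * a⁻¹ = s * (x * a⁻¹)
      rw [mul_assoc]
    have key : ∀ f : ↥(AutLgrp (↥(Odo Γ hdec)) (Set.range (tau Γ hdec))),
        ∀ x, (f : ↥(Odo Γ hdec) ≃ₜ ↥(Odo Γ hdec)) x =
          x * (f : ↥(Odo Γ hdec) ≃ₜ ↥(Odo Γ hdec)) 1 := by
      intro f x
      exact commutes_eq Γ hdec _ (fun g x => f.2 _ ⟨g, rfl⟩ x) x
    refine ⟨{
      toFun := fun f => ((f : ↥(Odo Γ hdec) ≃ₜ ↥(Odo Γ hdec)) 1)⁻¹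
      invFun := fun a => ⟨Homeomorph.mulRight a⁻¹, mem a⟩
      left_inv := ?_
      right_inv := ?_
      map_mul' := ?_ }⟩
    · intro f
      refine Subtype.ext (Homeomorph.ext fun x => ?_)
      show x * ((f : ↥(Odo Γ hdec) ≃ₜ ↥(Odo Γ hdec)) 1)⁻¹⁻¹ = _
      rw [inv_inv, ← key f x]
    · intro a
      show ((1 : ↥(Odo Γ hdec)) * a⁻¹)⁻¹ = a
      rw [one_mul, inv_inv]
    · intro f g
      show ((f : ↥(Odo Γ hdec) ≃ₜ ↥(Odo Γ hdec))
          ((g : ↥(Odo Γ hdec) ≃ₜ ↥(Odo Γ hdec)) 1))⁻¹ = _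
      rw [key f ((g : ↥(Odo Γ hdec) ≃ₜ ↥(Odo Γ hdec)) 1), mul_inv_rev]

end OdoPaper
end
end

section
/- Let G, H be infinite finitely generated residually finite groups with scales (G_n), (H_n) and odometers X_1 = G_{(G_n)}, X_2 = H_{(H_n)}. If there exist clopen subgroups U_1 ≤ X_1 and U_2 ≤ X_2 that are isomorphic as topological groups with [X_1 : U_1] = [X_2 : U_2] < ∞, then the topological full groups [[X_1]]_S and [[X_2]]_S are isomorphic, for S ∈ {L,R}. -/
open scoped Pointwise

noncomputable section
namespace OdoPaper


variable {G : Type*} [Group G]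

section TransferAux

/-- Discrete quotients are topological groups. -/
instance quotTopGroup (Γ : Subgroup G) [Γ.Normal] : IsTopologicalGroup (G ⧸ Γ) where
  continuous_mul := continuous_of_discreteTopology
  continuous_inv := continuous_of_discreteTopology

end TransferAux

section Transfer

variable {X Y : Type*} [Group X] [Group Y] [TopologicalSpace X] [TopologicalSpace Y]

/-- Left cosets of an open subgroup are open. -/
theorem cosetOpen [IsTopologicalGroup X] (U : Subgroup X) (hU : IsOpen (U : Set X)) (x : X) :
    IsOpen {z : X | (QuotientGroup.mk z : X ⧸ U) = QuotientGroup.mk x} := by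
  have h : {z : X | (QuotientGroup.mk z : X ⧸ U) = QuotientGroup.mk x}
      = (fun z => z⁻¹ * x) ⁻¹' (U : Set X) := by
    ext z
    simp only [Set.mem_setOf_eq, Set.mem_preimage, SetLike.mem_coe, QuotientGroup.eq]
  rw [h]
  exact hU.preimage (continuous_inv.mul continuous_const)

/-- Conjugation by a homeomorphism compatible with a finite-index open subgroup
preserves membership in the left topological full group. -/
theorem conj_mem_fullL [IsTopologicalGroup X] (U : Subgroup X) (hU : IsOpen (U : Set X))
    (hfin : Finite (X ⧸ U)) (φ : X ≃ₜ Y)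
    (H : ∀ s x x', (QuotientGroup.mk x : X ⧸ U) = QuotientGroup.mk x' →
      φ (s * x) * (φ x)⁻¹ = φ (s * x') * (φ x')⁻¹)
    {f : X ≃ₜ X} (hf : InFullL X f) : InFullL Y (φ.symm.trans (f.trans φ)) := by
  obtain ⟨ξ, hlc, hfr, hξ⟩ := hf
  classical
  set Ψ : X → (X ⧸ U) → Y := fun s c => φ (s * c.out) * (φ c.out)⁻¹ with hΨ
  set η : Y → Y := fun y => φ (ξ (φ.symm y) * φ.symm y) * y⁻¹ with hη
  have key : ∀ y : Y, η y = Ψ (ξ (φ.symm y)) (QuotientGroup.mk (φ.symm y)) := by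
    intro y
    have h1 : (QuotientGroup.mk (φ.symm y) : X ⧸ U)
        = QuotientGroup.mk ((QuotientGroup.mk (φ.symm y) : X ⧸ U)).out :=
      (QuotientGroup.out_eq' _).symm
    have h2 := H (ξ (φ.symm y)) (φ.symm y) _ h1
    have h3 : φ (φ.symm y) = y := φ.apply_symm_apply y
    have h4 : η y = φ (ξ (φ.symm y) * φ.symm y) * (φ (φ.symm y))⁻¹ := by
      simp only [hη, h3]
    rw [h4, h2]
  refine ⟨η, ?_, ?_, ?_⟩
  · rw [IsLocallyConstant.iff_exists_open]
    intro y
    refine ⟨φ.symm ⁻¹' ({z | (QuotientGroup.mk z : X ⧸ U) = QuotientGroup.mk (φ.symm y)}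
        ∩ ξ ⁻¹' {ξ (φ.symm y)}), ?_, ?_, ?_⟩
    · exact ((cosetOpen U hU _).inter (hlc {ξ (φ.symm y)})).preimage φ.symm.continuous
    · exact ⟨rfl, rfl⟩
    · rintro y' ⟨hc, hv⟩
      rw [key, key, hv, hc]
  · have : Set.range η ⊆ (fun p : X × (X ⧸ U) => Ψ p.1 p.2) ''
        (Set.range ξ ×ˢ Set.univ) := by
      rintro _ ⟨y, rfl⟩
      exact ⟨(ξ (φ.symm y), QuotientGroup.mk (φ.symm y)), ⟨⟨_, rfl⟩, trivial⟩, (key y).symm⟩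
    exact ((hfr.prod Set.finite_univ).image _).subset this
  · intro y
    show φ (f (φ.symm y)) = η y * y
    rw [hη, hξ (φ.symm y)]
    simp

end Transfer

section PM

variable {X Y : Type*} [Group X] [Group Y]

theorem mk_mul_coe (U : Subgroup Y) (a : Y) (u : ↥U) :
    (QuotientGroup.mk (a * ↑u) : Y ⧸ U) = QuotientGroup.mk a := by
  rw [QuotientGroup.eq]
  have h : (a * ↑u)⁻¹ * a = (↑u)⁻¹ := by group
  rw [h]
  exact U.inv_mem u.2

/-- Membership fact for the piecewise map. -/
theorem pm_memU (U : Subgroup X) (x : X) :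
    ((QuotientGroup.mk x : X ⧸ U)).out⁻¹ * x ∈ U :=
  QuotientGroup.eq.mp (QuotientGroup.out_eq' _)

/-- The piecewise translation map built from an isomorphism of clopen subgroups and
a bijection of the coset spaces. -/
def pm (U₁ : Subgroup X) (U₂ : Subgroup Y) (e : ↥U₁ ≃* ↥U₂) (β : X ⧸ U₁ ≃ Y ⧸ U₂)
    (x : X) : Y :=
  (β (QuotientGroup.mk x)).out *
    (e ⟨((QuotientGroup.mk x : X ⧸ U₁)).out⁻¹ * x, pm_memU U₁ x⟩ : ↥U₂)

theorem pm_mk (U₁ : Subgroup X) (U₂ : Subgroup Y) (e : ↥U₁ ≃* ↥U₂) (β : X ⧸ U₁ ≃ Y ⧸ U₂)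
    (x : X) : (QuotientGroup.mk (pm U₁ U₂ e β x) : Y ⧸ U₂) = β (QuotientGroup.mk x) := by
  rw [pm, mk_mul_coe]
  exact QuotientGroup.out_eq' _

theorem pm_leftInv (U₁ : Subgroup X) (U₂ : Subgroup Y) (e : ↥U₁ ≃* ↥U₂)
    (β : X ⧸ U₁ ≃ Y ⧸ U₂) (x : X) :
    pm U₂ U₁ e.symm β.symm (pm U₁ U₂ e β x) = x := by
  have hmk := pm_mk U₁ U₂ e β x
  have e1 : (β.symm (QuotientGroup.mk (pm U₁ U₂ e β x) : Y ⧸ U₂)).out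
      = (QuotientGroup.mk x : X ⧸ U₁).out := by rw [hmk, β.symm_apply_apply]
  have e2 : (⟨(QuotientGroup.mk (pm U₁ U₂ e β x) : Y ⧸ U₂).out⁻¹ * pm U₁ U₂ e β x,
        pm_memU U₂ _⟩ : ↥U₂)
      = e ⟨((QuotientGroup.mk x : X ⧸ U₁)).out⁻¹ * x, pm_memU U₁ x⟩ := by
    apply Subtype.ext
    show (QuotientGroup.mk (pm U₁ U₂ e β x) : Y ⧸ U₂).out⁻¹ * pm U₁ U₂ e β x = _
    rw [hmk]
    conv_lhs => rw [pm]
    rw [inv_mul_cancel_left]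
  show (β.symm (QuotientGroup.mk (pm U₁ U₂ e β x) : Y ⧸ U₂)).out *
      (e.symm ⟨(QuotientGroup.mk (pm U₁ U₂ e β x) : Y ⧸ U₂).out⁻¹ * pm U₁ U₂ e β x,
        pm_memU U₂ _⟩ : ↥U₁) = x
  rw [e1, e2, e.symm_apply_apply]
  show (QuotientGroup.mk x : X ⧸ U₁).out * (((QuotientGroup.mk x : X ⧸ U₁)).out⁻¹ * x) = x
  rw [mul_inv_cancel_left]

theorem pm_memU2 (U₁ : Subgroup X) (s z : X) :
    (QuotientGroup.mk (s * z) : X ⧸ U₁).out⁻¹ * s * (QuotientGroup.mk z : X ⧸ U₁).out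
      ∈ U₁ := by
  have h1 := pm_memU U₁ (s * z)
  have h2 := pm_memU U₁ z
  have h3 : (QuotientGroup.mk (s * z) : X ⧸ U₁).out⁻¹ * s *
      (QuotientGroup.mk z : X ⧸ U₁).out
      = ((QuotientGroup.mk (s * z) : X ⧸ U₁).out⁻¹ * (s * z)) *
        ((QuotientGroup.mk z : X ⧸ U₁).out⁻¹ * z)⁻¹ := by group
  rw [h3]
  exact U₁.mul_mem h1 (U₁.inv_mem h2)

/-- The compatibility property of `pm` needed for transferring full groups. -/
theorem pm_H (U₁ : Subgroup X) (U₂ : Subgroup Y) (e : ↥U₁ ≃* ↥U₂) (β : X ⧸ U₁ ≃ Y ⧸ U₂)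
    (s x x' : X) (h : (QuotientGroup.mk x : X ⧸ U₁) = QuotientGroup.mk x') :
    pm U₁ U₂ e β (s * x) * (pm U₁ U₂ e β x)⁻¹
      = pm U₁ U₂ e β (s * x') * (pm U₁ U₂ e β x')⁻¹ := by
  have key : ∀ z : X, pm U₁ U₂ e β (s * z) * (pm U₁ U₂ e β z)⁻¹
      = (β (QuotientGroup.mk (s * z))).out *
        (e ⟨(QuotientGroup.mk (s * z) : X ⧸ U₁).out⁻¹ * s *
            (QuotientGroup.mk z : X ⧸ U₁).out, pm_memU2 U₁ s z⟩ : ↥U₂) *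
        (β (QuotientGroup.mk z)).out⁻¹ := by
    intro z
    rw [pm, pm]
    have he : (e ⟨(QuotientGroup.mk (s * z) : X ⧸ U₁).out⁻¹ * s *
          (QuotientGroup.mk z : X ⧸ U₁).out, pm_memU2 U₁ s z⟩ : ↥U₂)
        = e ⟨(QuotientGroup.mk (s * z) : X ⧸ U₁).out⁻¹ * (s * z), pm_memU U₁ (s * z)⟩ *
          (e ⟨(QuotientGroup.mk z : X ⧸ U₁).out⁻¹ * z, pm_memU U₁ z⟩)⁻¹ := by
      rw [← map_inv, ← map_mul]
      congr 1
      apply Subtype.ext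
      show _ = ((QuotientGroup.mk (s * z) : X ⧸ U₁).out⁻¹ * (s * z)) *
          ((QuotientGroup.mk z : X ⧸ U₁).out⁻¹ * z)⁻¹
      group
    rw [he]
    push_cast
    group
  have hmk : (QuotientGroup.mk (s * x) : X ⧸ U₁) = QuotientGroup.mk (s * x') := by
    rw [QuotientGroup.eq] at h ⊢
    have h3 : (s * x)⁻¹ * (s * x') = x⁻¹ * x' := by group
    rw [h3]
    exact h
  rw [key, key]
  simp only [h, hmk]

end PM



section Cont

variable {X Y : Type*} [Group X] [Group Y] [TopologicalSpace X] [TopologicalSpace Y]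
variable [IsTopologicalGroup X] [IsTopologicalGroup Y]

theorem pm_continuous (U₁ : Subgroup X) (U₂ : Subgroup Y) (hU₁ : IsOpen (U₁ : Set X))
    (e : ↥U₁ ≃* ↥U₂) (he : Continuous e) (β : X ⧸ U₁ ≃ Y ⧸ U₂) :
    Continuous (pm U₁ U₂ e β) := by
  rw [continuous_iff_continuousAt]
  intro x
  set N := {z : X | (QuotientGroup.mk z : X ⧸ U₁) = QuotientGroup.mk x} with hNdef
  have hN : IsOpen N := cosetOpen U₁ hU₁ x
  have hxN : x ∈ N := rfl
  refine ContinuousOn.continuousAt ?_ (hN.mem_nhds hxN)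
  rw [continuousOn_iff_continuous_restrict]
  have hmem : ∀ z : N, (QuotientGroup.mk x : X ⧸ U₁).out⁻¹ * (z : X) ∈ U₁ := by
    intro z
    rw [← QuotientGroup.eq]
    exact (QuotientGroup.out_eq' _).trans z.2.symm
  have heq : N.domRestrict (pm U₁ U₂ e β) = fun z : N =>
      (β (QuotientGroup.mk x)).out *
        (e ⟨(QuotientGroup.mk x : X ⧸ U₁).out⁻¹ * (z : X), hmem z⟩ : ↥U₂) := by
    funext z
    have hz : (QuotientGroup.mk (z : X) : X ⧸ U₁) = QuotientGroup.mk x := z.2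
    show pm U₁ U₂ e β (z : X) = _
    simp only [pm, hz]
  rw [heq]
  exact continuous_const.mul ((he.comp ((continuous_const.mul
    continuous_subtype_val).subtype_mk _)).subtype_val)

/-- The piecewise translation homeomorphism. -/
def pmHomeo (U₁ : Subgroup X) (U₂ : Subgroup Y) (hU₁ : IsOpen (U₁ : Set X))
    (hU₂ : IsOpen (U₂ : Set Y)) (e : ↥U₁ ≃* ↥U₂) (he : Continuous e)
    (he' : Continuous e.symm) (β : X ⧸ U₁ ≃ Y ⧸ U₂) : X ≃ₜ Y where
  toFun := pm U₁ U₂ e β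
  invFun := pm U₂ U₁ e.symm β.symm
  left_inv := pm_leftInv U₁ U₂ e β
  right_inv y := by
    have h := pm_leftInv U₂ U₁ e.symm β.symm y
    simpa using h
  continuous_toFun := pm_continuous U₁ U₂ hU₁ e he β
  continuous_invFun := pm_continuous U₂ U₁ hU₂ e.symm he' β.symm

/-- Conjugation by a suitable homeomorphism gives an isomorphism of the left
topological full groups. -/
def tfglEquivOfHomeo (φ : X ≃ₜ Y)
    (h1 : ∀ f : X ≃ₜ X, InFullL X f → InFullL Y (φ.symm.trans (f.trans φ)))
    (h2 : ∀ g : Y ≃ₜ Y, InFullL Y g → InFullL X (φ.trans (g.trans φ.symm))) :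
    ↥(TFGL X) ≃* ↥(TFGL Y) where
  toFun f := ⟨φ.symm.trans (f.1.trans φ), h1 f.1 f.2⟩
  invFun g := ⟨φ.trans (g.1.trans φ.symm), h2 g.1 g.2⟩
  left_inv f := Subtype.ext (Homeomorph.ext fun x => by
    show φ.symm (φ (f.1 (φ.symm (φ x)))) = f.1 x
    simp)
  right_inv g := Subtype.ext (Homeomorph.ext fun y => by
    show φ (φ.symm (g.1 (φ (φ.symm y)))) = g.1 y
    simp)
  map_mul' f g := Subtype.ext (Homeomorph.ext fun y => by
    show φ (f.1 (g.1 (φ.symm y))) = φ (f.1 (φ.symm (φ (g.1 (φ.symm y)))))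
    rw [φ.symm_apply_apply])

/-- Conjugation by the inversion homeomorphism exchanges the left and right
topological full groups. -/
def tfgLREquiv (X : Type*) [Group X] [TopologicalSpace X] [IsTopologicalGroup X] :
    ↥(TFGL X) ≃* ↥(TFGR X) where
  toFun f := ⟨(Homeomorph.inv X).trans (f.1.trans (Homeomorph.inv X)), by
    obtain ⟨ξ, hlc, hfr, hξ⟩ := f.2
    refine ⟨fun x => ξ x⁻¹, hlc.comp_continuous continuous_inv,
      hfr.subset ?_, fun x => ?_⟩
    · rintro _ ⟨x, rfl⟩; exact ⟨x⁻¹, rfl⟩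
    · show (f.1 x⁻¹)⁻¹ = x * (ξ x⁻¹)⁻¹
      rw [hξ x⁻¹, mul_inv_rev, inv_inv]⟩
  invFun g := ⟨(Homeomorph.inv X).trans (g.1.trans (Homeomorph.inv X)), by
    obtain ⟨ξ, hlc, hfr, hξ⟩ := g.2
    refine ⟨fun x => ξ x⁻¹, hlc.comp_continuous continuous_inv,
      hfr.subset ?_, fun x => ?_⟩
    · rintro _ ⟨x, rfl⟩; exact ⟨x⁻¹, rfl⟩
    · show (g.1 x⁻¹)⁻¹ = ξ x⁻¹ * x
      rw [hξ x⁻¹, mul_inv_rev, inv_inv, inv_inv]⟩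
  left_inv f := Subtype.ext (Homeomorph.ext fun x => by
    show ((f.1 x⁻¹⁻¹)⁻¹)⁻¹ = f.1 x
    simp)
  right_inv g := Subtype.ext (Homeomorph.ext fun x => by
    show ((g.1 x⁻¹⁻¹)⁻¹)⁻¹ = g.1 x
    simp)
  map_mul' f g := Subtype.ext (Homeomorph.ext fun x => by
    show (f.1 (g.1 x⁻¹))⁻¹ = (f.1 ((g.1 x⁻¹)⁻¹)⁻¹)⁻¹
    rw [inv_inv])

/-- The main transfer result: isomorphic open subgroups of equal finite index yield
isomorphic topological full groups. -/
theorem tfg_transfer (U₁ : Subgroup X) (U₂ : Subgroup Y)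
    (h₁ : IsOpen (U₁ : Set X)) (h₂ : IsOpen (U₂ : Set Y))
    (hidx : U₁.index = U₂.index) (hne : U₁.index ≠ 0)
    (e : ↥U₁ ≃* ↥U₂) (he : Continuous e) (he' : Continuous e.symm) :
    Nonempty (↥(TFGR X) ≃* ↥(TFGR Y)) ∧ Nonempty (↥(TFGL X) ≃* ↥(TFGL Y)) := by
  have hfin1 : Finite (X ⧸ U₁) := Nat.finite_of_card_ne_zero hne
  have hne2 : U₂.index ≠ 0 := hidx ▸ hne
  have hfin2 : Finite (Y ⧸ U₂) := Nat.finite_of_card_ne_zero hne2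
  have hF1 : Fintype (X ⧸ U₁) := Fintype.ofFinite _
  have hF2 : Fintype (Y ⧸ U₂) := Fintype.ofFinite _
  have hcard : Fintype.card (X ⧸ U₁) = Fintype.card (Y ⧸ U₂) := by
    rw [← Nat.card_eq_fintype_card, ← Nat.card_eq_fintype_card]
    exact hidx
  let β : X ⧸ U₁ ≃ Y ⧸ U₂ := Fintype.equivOfCardEq hcard
  let φ : X ≃ₜ Y := pmHomeo U₁ U₂ h₁ h₂ e he he' β
  have hL : ↥(TFGL X) ≃* ↥(TFGL Y) := by
    refine tfglEquivOfHomeo φ (fun f hf => ?_) (fun g hg => ?_)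
    · exact conj_mem_fullL U₁ h₁ hfin1 φ (fun s x x' h => pm_H U₁ U₂ e β s x x' h) hf
    · exact conj_mem_fullL U₂ h₂ hfin2 φ.symm
        (fun s y y' h => pm_H U₂ U₁ e.symm β.symm s y y' h) hg
  exact ⟨⟨((tfgLREquiv X).symm.trans hL).trans (tfgLREquiv Y)⟩, ⟨hL⟩⟩

end Cont

/-- isomorphic clopen subgroups of the same finite index yield isomorphic
topological full groups (both for the left and right actions). -/
theorem stmt10 {G H : Type*} [Group G] [Group H] [Infinite G] [Infinite H]
    [Group.FG G] [Group.FG H]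
    (ΓG : ℕ → Subgroup G) [∀ n, (ΓG n).Normal] [∀ n, (ΓG n).FiniteIndex]
    (hG : ∀ n, ΓG (n + 1) ≤ ΓG n) (htG : ∀ g : G, (∀ n, g ∈ ΓG n) → g = 1)
    (ΓH : ℕ → Subgroup H) [∀ n, (ΓH n).Normal] [∀ n, (ΓH n).FiniteIndex]
    (hH : ∀ n, ΓH (n + 1) ≤ ΓH n) (htH : ∀ h : H, (∀ n, h ∈ ΓH n) → h = 1)
    (h : ∃ (U₁ : Subgroup ↥(Odo ΓG hG)) (U₂ : Subgroup ↥(Odo ΓH hH)),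
      IsClopen (U₁ : Set ↥(Odo ΓG hG)) ∧ IsClopen (U₂ : Set ↥(Odo ΓH hH)) ∧
      U₁.index = U₂.index ∧ U₁.index ≠ 0 ∧
      ∃ e : ↥U₁ ≃* ↥U₂, Continuous e ∧ Continuous e.symm) :
    Nonempty (↥(TFGR ↥(Odo ΓG hG)) ≃* ↥(TFGR ↥(Odo ΓH hH))) ∧
    Nonempty (↥(TFGL ↥(Odo ΓG hG)) ≃* ↥(TFGL ↥(Odo ΓH hH))) := by
  obtain ⟨U₁, U₂, hc₁, hc₂, hidx, hne, e, he, he'⟩ := h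
  exact tfg_transfer U₁ U₂ hc₁.isOpen hc₂.isOpen hidx hne e he he'

end OdoPaper
end
end

section
/- Let X be a compact topological group which is an odometer (profinite, metrizable, infinite), and let (U_n) be a decreasing sequence of clopen subgroups of X with trivial intersection. For each n, the group [[X]]_{U_n,L} of elements of the topological full group of the left translation action that act as a left translation on each left coset aU_n is isomorphic to the semidirect product [[X]]^0_{U_n,L} ⋊ Sym(X/U_n), where [[X]]^0_{U_n,L} is the subgroup of elements preserving each coset aU_n (acting on aU_n by left multiplication by an element of aU_na^{-1}). -/
open scoped Pointwise

noncomputable section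
namespace OdoPaper


variable {G : Type*} [Group G]

section Stmt11Aux

variable {X : Type*} [Group X] [TopologicalSpace X] [IsTopologicalGroup X]
variable (U : Subgroup X)

theorem s11_step {f : X ≃ₜ X} (hf : f ∈ fullUL X U) {x y : X}
    (h : x⁻¹ * y ∈ U) : (f x)⁻¹ * f y ∈ U := by
  obtain ⟨ξ, hξ⟩ := hf y
  have hxy : (QuotientGroup.mk x : X ⧸ U) = QuotientGroup.mk y :=
    QuotientGroup.eq.2 h
  rw [hξ x hxy, hξ y rfl]
  have : (ξ * x)⁻¹ * (ξ * y) = x⁻¹ * y := by group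
  rw [this]; exact h

/-- The permutation of `X ⧸ U` induced by `f ∈ fullUL X U`. -/
def s11_permOf {f : X ≃ₜ X} (hf : f ∈ fullUL X U) : Equiv.Perm (X ⧸ U) where
  toFun := Quotient.map' f fun a b hab => by
    rw [QuotientGroup.leftRel_apply] at hab ⊢
    exact s11_step U hf hab
  invFun := Quotient.map' f.symm fun a b hab => by
    rw [QuotientGroup.leftRel_apply] at hab ⊢
    exact s11_step U ((fullUL X U).inv_mem hf) hab
  left_inv q := Quotient.inductionOn' q fun a => by
    simp [Quotient.map'_mk'']
  right_inv q := Quotient.inductionOn' q fun a => by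
    simp [Quotient.map'_mk'']

theorem s11_permOf_mk {f : X ≃ₜ X} (hf : f ∈ fullUL X U) (x : X) :
    s11_permOf U hf (QuotientGroup.mk x) = QuotientGroup.mk (f x) := rfl

/-- The homomorphism `[[X]]_{U,L} → Sym(X ⧸ U)`. -/
def s11_pi : ↥(fullUL X U) →* Equiv.Perm (X ⧸ U) where
  toFun f := s11_permOf U f.2
  map_one' := Equiv.ext fun q => Quotient.inductionOn' q fun _ => rfl
  map_mul' f g := Equiv.ext fun q => Quotient.inductionOn' q fun _ => rfl

variable (hU : IsOpen (U : Set X))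

include hU in
theorem s11_fiber_open (q : X ⧸ U) :
    IsOpen {x : X | (QuotientGroup.mk x : X ⧸ U) = q} := by
  obtain ⟨a, rfl⟩ := QuotientGroup.mk_surjective q
  have : {x : X | (QuotientGroup.mk x : X ⧸ U) = QuotientGroup.mk a} =
      (fun x => a⁻¹ * x) ⁻¹' (U : Set X) := by
    ext x
    simp only [Set.mem_setOf_eq, Set.mem_preimage, SetLike.mem_coe, QuotientGroup.eq]
    constructor
    · intro h
      have := U.inv_mem h
      simpa [mul_inv_rev] using this
    · intro h
      have := U.inv_mem h
      simpa [mul_inv_rev] using this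
  rw [this]
  exact hU.preimage (continuous_const.mul continuous_id)

include hU in
theorem s11_mk_lc :
    IsLocallyConstant (fun x : X => (QuotientGroup.mk x : X ⧸ U)) := by
  intro s
  have : (fun x : X => (QuotientGroup.mk x : X ⧸ U)) ⁻¹' s =
      ⋃ q ∈ s, {x : X | (QuotientGroup.mk x : X ⧸ U) = q} := by
    ext x; simp
  rw [this]
  exact isOpen_biUnion fun q _ => s11_fiber_open U hU q

/-- The cocycle for the section `Sym(X ⧸ U) → [[X]]_{U,L}`. -/
def s11_c (σ : Equiv.Perm (X ⧸ U)) (x : X) : X :=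
  (σ (QuotientGroup.mk x)).out * ((QuotientGroup.mk x : X ⧸ U)).out⁻¹

theorem s11_c_congr (σ : Equiv.Perm (X ⧸ U)) {x y : X}
    (h : (QuotientGroup.mk x : X ⧸ U) = QuotientGroup.mk y) :
    s11_c U σ x = s11_c U σ y := by
  unfold s11_c; rw [h]

theorem s11_mk_c (σ : Equiv.Perm (X ⧸ U)) (x : X) :
    (QuotientGroup.mk (s11_c U σ x * x) : X ⧸ U) = σ (QuotientGroup.mk x) := by
  unfold s11_c
  have hu : ((QuotientGroup.mk x : X ⧸ U)).out⁻¹ * x ∈ U := by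
    rw [← QuotientGroup.eq]
    exact QuotientGroup.out_eq' _
  rw [mul_assoc]
  rw [QuotientGroup.mk_mul_of_mem _ hu]
  exact QuotientGroup.out_eq' _

theorem s11_comp (σ τ : Equiv.Perm (X ⧸ U)) (x : X) :
    s11_c U σ (s11_c U τ x * x) * (s11_c U τ x * x) = s11_c U (σ * τ) x * x := by
  have h1 : (QuotientGroup.mk (s11_c U τ x * x) : X ⧸ U) = τ (QuotientGroup.mk x) :=
    s11_mk_c U τ x
  have h2 : s11_c U σ (s11_c U τ x * x) =
      (σ (τ (QuotientGroup.mk x))).out * (τ (QuotientGroup.mk x)).out⁻¹ := by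
    unfold s11_c at h1 ⊢
    rw [h1]
  rw [h2]
  unfold s11_c
  rw [Equiv.Perm.mul_apply]
  group

theorem s11_c_one (x : X) : s11_c U 1 x * x = x := by
  unfold s11_c
  simp

include hU in
theorem s11_cont (σ : Equiv.Perm (X ⧸ U)) :
    Continuous fun x : X => s11_c U σ x * x := by
  have h1 : IsLocallyConstant (s11_c U σ) := by
    have := (s11_mk_lc U hU).comp
      (fun q : X ⧸ U => (σ q).out * q.out⁻¹)
    exact this
  exact h1.continuous.mul continuous_id

/-- The section homeomorphism attached to a permutation of cosets. -/
def s11_homeo (σ : Equiv.Perm (X ⧸ U)) : X ≃ₜ X where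
  toFun x := s11_c U σ x * x
  invFun x := s11_c U σ⁻¹ x * x
  left_inv x := by
    show s11_c U σ⁻¹ (s11_c U σ x * x) * (s11_c U σ x * x) = x
    have := s11_comp U σ⁻¹ σ x
    rw [inv_mul_cancel] at this
    rw [this, s11_c_one]
  right_inv x := by
    show s11_c U σ (s11_c U σ⁻¹ x * x) * (s11_c U σ⁻¹ x * x) = x
    have := s11_comp U σ σ⁻¹ x
    rw [mul_inv_cancel] at this
    rw [this, s11_c_one]
  continuous_toFun := s11_cont U hU σ
  continuous_invFun := s11_cont U hU σ⁻¹

theorem s11_homeo_mem (σ : Equiv.Perm (X ⧸ U)) :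
    s11_homeo U hU σ ∈ fullUL X U := by
  intro a
  refine ⟨s11_c U σ a, fun x hx => ?_⟩
  show s11_c U σ x * x = s11_c U σ a * x
  rw [s11_c_congr U σ hx]

/-- The section `Sym(X ⧸ U) → [[X]]_{U,L}`. -/
def s11_s : Equiv.Perm (X ⧸ U) →* ↥(fullUL X U) where
  toFun σ := ⟨s11_homeo U hU σ, s11_homeo_mem U hU σ⟩
  map_one' := Subtype.ext (Homeomorph.ext fun x => s11_c_one U x)
  map_mul' σ τ := Subtype.ext (Homeomorph.ext fun x => (s11_comp U σ τ x).symm)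

theorem s11_pi_s (σ : Equiv.Perm (X ⧸ U)) : s11_pi U (s11_s U hU σ) = σ :=
  Equiv.ext fun q => Quotient.inductionOn' q fun x => s11_mk_c U σ x

theorem s11_full0L_le : full0L X U ≤ fullUL X U := by
  intro f hf a
  obtain ⟨u, _, h⟩ := hf a
  exact ⟨a * u * a⁻¹, h⟩

theorem s11_mem_full0L_iff {f : X ≃ₜ X} (hf : f ∈ fullUL X U) :
    f ∈ full0L X U ↔ s11_pi U ⟨f, hf⟩ = 1 := by
  constructor
  · intro h0
    refine Equiv.ext fun q => Quotient.inductionOn' q fun x => ?_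
    obtain ⟨u, hu, hxu⟩ := h0 x
    have hfx : f x = x * u := by
      have := hxu x rfl
      rw [this]; group
    show (QuotientGroup.mk (f x) : X ⧸ U) = QuotientGroup.mk x
    rw [hfx, QuotientGroup.mk_mul_of_mem _ hu]
  · intro h1 a
    obtain ⟨ξ, hξ⟩ := hf a
    have hfa : (QuotientGroup.mk (f a) : X ⧸ U) = QuotientGroup.mk a := by
      have := congrFun (congrArg (fun e : Equiv.Perm (X ⧸ U) => e.toFun) h1)
        (QuotientGroup.mk a)
      exact this
    refine ⟨a⁻¹ * ξ * a, ?_, fun x hx => ?_⟩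
    · have : (QuotientGroup.mk (ξ * a) : X ⧸ U) = QuotientGroup.mk a := by
        rw [← hξ a rfl]; exact hfa
      have h2 : (ξ * a)⁻¹ * a ∈ U := QuotientGroup.eq.1 this
      have h3 : (ξ * a)⁻¹ * a = (a⁻¹ * ξ * a)⁻¹ := by group
      rw [h3] at h2
      exact (U.inv_mem_iff).1 h2
    · rw [hξ x hx]
      group

theorem s11_conj_mem (σ : Equiv.Perm (X ⧸ U)) {g : X ≃ₜ X} (hg : g ∈ full0L X U) :
    ((s11_s U hU σ : X ≃ₜ X) * g * (s11_s U hU σ : X ≃ₜ X)⁻¹) ∈ full0L X U := by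
  have hgU : g ∈ fullUL X U := s11_full0L_le U hg
  have hmem : (s11_s U hU σ : X ≃ₜ X) * g * (s11_s U hU σ : X ≃ₜ X)⁻¹ ∈ fullUL X U :=
    mul_mem (mul_mem (s11_s U hU σ).2 hgU) ((fullUL X U).inv_mem (s11_s U hU σ).2)
  rw [s11_mem_full0L_iff U hmem]
  have heq : (⟨_, hmem⟩ : ↥(fullUL X U)) =
      s11_s U hU σ * ⟨g, hgU⟩ * (s11_s U hU σ)⁻¹ := rfl
  rw [heq, map_mul, map_mul, map_inv, s11_pi_s,
    (s11_mem_full0L_iff U hgU).1 hg]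
  simp

/-- Conjugation action of `Sym(X ⧸ U)` on `[[X]]⁰_{U,L}`. -/
def s11_phi : Equiv.Perm (X ⧸ U) →* MulAut ↥(full0L X U) where
  toFun σ :=
    { toFun := fun g => ⟨(s11_s U hU σ : X ≃ₜ X) * g * (s11_s U hU σ : X ≃ₜ X)⁻¹,
        s11_conj_mem U hU σ g.2⟩
      invFun := fun g => ⟨(s11_s U hU σ⁻¹ : X ≃ₜ X) * g * (s11_s U hU σ⁻¹ : X ≃ₜ X)⁻¹,
        s11_conj_mem U hU σ⁻¹ g.2⟩
      left_inv := fun g => Subtype.ext (by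
        have hinv : (s11_s U hU σ⁻¹ : X ≃ₜ X) = (s11_s U hU σ : X ≃ₜ X)⁻¹ := by
          rw [map_inv]; rfl
        show (s11_s U hU σ⁻¹ : X ≃ₜ X) *
          ((s11_s U hU σ : X ≃ₜ X) * g * (s11_s U hU σ : X ≃ₜ X)⁻¹) *
          (s11_s U hU σ⁻¹ : X ≃ₜ X)⁻¹ = g
        rw [hinv]; group)
      right_inv := fun g => Subtype.ext (by
        have hinv : (s11_s U hU σ⁻¹ : X ≃ₜ X) = (s11_s U hU σ : X ≃ₜ X)⁻¹ := by
          rw [map_inv]; rfl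
        show (s11_s U hU σ : X ≃ₜ X) *
          ((s11_s U hU σ⁻¹ : X ≃ₜ X) * g * (s11_s U hU σ⁻¹ : X ≃ₜ X)⁻¹) *
          (s11_s U hU σ : X ≃ₜ X)⁻¹ = g
        rw [hinv]; group)
      map_mul' := fun g h => Subtype.ext (by
        show (s11_s U hU σ : X ≃ₜ X) * (g * h) * (s11_s U hU σ : X ≃ₜ X)⁻¹ =
          ((s11_s U hU σ : X ≃ₜ X) * g * (s11_s U hU σ : X ≃ₜ X)⁻¹) *
          ((s11_s U hU σ : X ≃ₜ X) * h * (s11_s U hU σ : X ≃ₜ X)⁻¹)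
        group) }
  map_one' := MulEquiv.ext fun g => Subtype.ext (by
    show (s11_s U hU 1 : X ≃ₜ X) * g * (s11_s U hU 1 : X ≃ₜ X)⁻¹ = g
    rw [map_one]
    show (1 : X ≃ₜ X) * g * (1 : X ≃ₜ X)⁻¹ = g
    group)
  map_mul' σ τ := MulEquiv.ext fun g => Subtype.ext (by
    have hmul : (s11_s U hU (σ * τ) : X ≃ₜ X) =
        (s11_s U hU σ : X ≃ₜ X) * (s11_s U hU τ : X ≃ₜ X) := by
      rw [map_mul]; rfl
    show (s11_s U hU (σ * τ) : X ≃ₜ X) * g * (s11_s U hU (σ * τ) : X ≃ₜ X)⁻¹ =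
      (s11_s U hU σ : X ≃ₜ X) *
        ((s11_s U hU τ : X ≃ₜ X) * g * (s11_s U hU τ : X ≃ₜ X)⁻¹) *
        (s11_s U hU σ : X ≃ₜ X)⁻¹
    rw [hmul]; group)

end Stmt11Aux

/-- `[[X]]_{Uₙ,L} ≅ [[X]]⁰_{Uₙ,L} ⋊ Sym(X/Uₙ)` for a profinite group `X`
and a decreasing sequence of clopen subgroups with trivial intersection. -/
theorem stmt11 {X : Type*} [Group X] [TopologicalSpace X] [IsTopologicalGroup X]
    [CompactSpace X] [TotallyDisconnectedSpace X] [TopologicalSpace.MetrizableSpace X]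
    [Infinite X] (U : ℕ → Subgroup X) (hdec : ∀ n, U (n + 1) ≤ U n)
    (hclopen : ∀ n, IsClopen ((U n : Subgroup X) : Set X))
    (htriv : ∀ x : X, (∀ n, x ∈ U n) → x = 1) (n : ℕ) :
    ∃ φ : Equiv.Perm (X ⧸ U n) →* MulAut ↥(full0L X (U n)),
      Nonempty (↥(fullUL X (U n)) ≃*
        (↥(full0L X (U n)) ⋊[φ] Equiv.Perm (X ⧸ U n))) := by
  have hU : IsOpen ((U n : Subgroup X) : Set X) := (hclopen n).2
  refine ⟨s11_phi (U n) hU, ?_⟩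
  set N := full0L X (U n)
  -- the inclusion full0L → fullUL
  let ι : ↥(full0L X (U n)) →* ↥(fullUL X (U n)) :=
    Subgroup.inclusion (s11_full0L_le (U n))
  have hcompat : ∀ σ : Equiv.Perm (X ⧸ U n),
      ι.comp (s11_phi (U n) hU σ).toMonoidHom =
      (MulAut.conj (s11_s (U n) hU σ)).toMonoidHom.comp ι := by
    intro σ
    ext g
    rfl
  let F := SemidirectProduct.lift ι (s11_s (U n) hU) hcompat
  have hF : ∀ x : ↥(full0L X (U n)) ⋊[s11_phi (U n) hU] Equiv.Perm (X ⧸ U n),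
      F x = ι x.left * s11_s (U n) hU x.right := by
    intro x; rfl
  have hpiι : ∀ g : ↥(full0L X (U n)), s11_pi (U n) (ι g) = 1 := by
    intro g
    exact ((s11_mem_full0L_iff (U n) (s11_full0L_le (U n) g.2)).1 g.2)
  have hinj : Function.Injective F := by
    rw [injective_iff_map_eq_one]
    intro x hx
    rw [hF] at hx
    have hpi : s11_pi (U n) (ι x.left * s11_s (U n) hU x.right) = 1 := by
      rw [hx, map_one]
    rw [map_mul, hpiι, one_mul, s11_pi_s] at hpi
    have hleft : ι x.left = 1 := by
      rw [hpi, map_one, mul_one] at hx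
      exact hx
    have hl : x.left = 1 := by
      apply Subgroup.inclusion_injective (s11_full0L_le (U n))
      rw [hleft, map_one]
    ext
    · rw [hl]; rfl
    · rw [hpi]; rfl
  have hsurj : Function.Surjective F := by
    intro f
    set σ := s11_pi (U n) f with hσ
    have hg : ((f * (s11_s (U n) hU σ)⁻¹ : ↥(fullUL X (U n))) : X ≃ₜ X) ∈
        full0L X (U n) := by
      rw [s11_mem_full0L_iff (U n) (f * (s11_s (U n) hU σ)⁻¹).2]
      have : (⟨_, (f * (s11_s (U n) hU σ)⁻¹).2⟩ : ↥(fullUL X (U n))) =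
          f * (s11_s (U n) hU σ)⁻¹ := rfl
      rw [this, map_mul, map_inv, s11_pi_s, ← hσ, mul_inv_cancel]
    refine ⟨⟨⟨_, hg⟩, σ⟩, ?_⟩
    rw [hF]
    have : ι ⟨_, hg⟩ = f * (s11_s (U n) hU σ)⁻¹ := rfl
    rw [this]
    group
  exact ⟨(MulEquiv.ofBijective F ⟨hinj, hsurj⟩).symm⟩


end OdoPaper
end
end

section
/- Let G be an infinite residually finite group with scale (Γ_n) and X the associated odometer. For every n and every a ∈ G/Γ_n, the automorphism group of the minimal system ([a]_n, Γ_n) given by left multiplication of Γ_n equals {x ↦ xξ^{-1} restricted to [a]_n : ξ ∈ [1]_n}, i.e., all right translations by elements of the clopen subgroup [1]_n. -/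
open scoped Pointwise

noncomputable section
namespace OdoPaper


variable {G : Type*} [Group G]

section Aux13

variable {G : Type*} [Group G] (Γ : ℕ → Subgroup G) [∀ n, (Γ n).Normal]
  (hdec : ∀ n, Γ (n + 1) ≤ Γ n)

theorem odo_coe_back (x : Odo Γ hdec) (c : G) : ∀ k d,
    (x : ∀ m, G ⧸ Γ m) (k + d) = QuotientGroup.mk c →
      (x : ∀ m, G ⧸ Γ m) k = QuotientGroup.mk c := by
  intro k d
  induction d with
  | zero => exact id
  | succ d ih =>
    intro h
    apply ih
    have h2 : odoMap Γ hdec (k + d) ((x : ∀ m, G ⧸ Γ m) (k + d + 1))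
        = (x : ∀ m, G ⧸ Γ m) (k + d) := x.2 (k + d)
    have h' : (x : ∀ m, G ⧸ Γ m) (k + d + 1) = QuotientGroup.mk c := h
    rw [← h2, h']
    rfl

theorem odo_coe_le (x : Odo Γ hdec) (c : G) {k M : ℕ} (hkM : k ≤ M)
    (h : (x : ∀ m, G ⧸ Γ m) M = QuotientGroup.mk c) :
    (x : ∀ m, G ⧸ Γ m) k = QuotientGroup.mk c := by
  obtain ⟨d, rfl⟩ := Nat.exists_eq_add_of_le hkM
  exact odo_coe_back Γ hdec x c k d h

theorem odo_coe_mul (p q : Odo Γ hdec) (k : ℕ) :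
    ((p * q : Odo Γ hdec) : ∀ m, G ⧸ Γ m) k
      = (p : ∀ m, G ⧸ Γ m) k * (q : ∀ m, G ⧸ Γ m) k := rfl

theorem odo_coe_inv (p : Odo Γ hdec) (k : ℕ) :
    ((p⁻¹ : Odo Γ hdec) : ∀ m, G ⧸ Γ m) k = ((p : ∀ m, G ⧸ Γ m) k)⁻¹ := rfl

theorem tau_coe (g : G) (k : ℕ) :
    ((tau Γ hdec g : Odo Γ hdec) : ∀ m, G ⧸ Γ m) k = QuotientGroup.mk g := rfl

theorem mem_cyl_tau_mul {n : ℕ} {a : G ⧸ Γ n} {γ : G} (hγ : γ ∈ Γ n)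
    {x : Odo Γ hdec} (hx : x ∈ cyl Γ hdec n a) :
    tau Γ hdec γ * x ∈ cyl Γ hdec n a := by
  show ((tau Γ hdec γ * x : Odo Γ hdec) : ∀ m, G ⧸ Γ m) n = a
  rw [odo_coe_mul, tau_coe]
  rw [show (QuotientGroup.mk γ : G ⧸ Γ n) = 1 from (QuotientGroup.eq_one_iff γ).mpr hγ,
    one_mul]
  exact hx

theorem odo_rightMul_continuous (c : Odo Γ hdec) :
    Continuous fun y : Odo Γ hdec => y * c := by
  apply Continuous.subtype_mk
  apply continuous_pi
  intro k
  have h1 : Continuous fun y : Odo Γ hdec => (y : ∀ m, G ⧸ Γ m) k :=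
    (continuous_apply k).comp continuous_subtype_val
  have h2 : Continuous fun q : G ⧸ Γ k => q * (c : ∀ m, G ⧸ Γ m) k :=
    continuous_of_discreteTopology
  exact h2.comp h1

end Aux13

/-- the automorphisms of the minimal system `([a]ₙ, Γₙ)` are exactly the
right translations by elements of the clopen subgroup `[1]ₙ`. -/
theorem stmt13 {G : Type*} [Group G] (Γ : ℕ → Subgroup G) [∀ n, (Γ n).Normal]
    [∀ n, (Γ n).FiniteIndex] (hdec : ∀ n, Γ (n + 1) ≤ Γ n)
    (htriv : ∀ g : G, (∀ n, g ∈ Γ n) → g = 1) [Infinite G] (n : ℕ) (a : G ⧸ Γ n) :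
    ∀ f g : ↥(Odo Γ hdec) → ↥(Odo Γ hdec),
      ContinuousOn f (cyl Γ hdec n a) → ContinuousOn g (cyl Γ hdec n a) →
      Set.MapsTo f (cyl Γ hdec n a) (cyl Γ hdec n a) →
      Set.MapsTo g (cyl Γ hdec n a) (cyl Γ hdec n a) →
      (∀ x ∈ cyl Γ hdec n a, g (f x) = x) → (∀ x ∈ cyl Γ hdec n a, f (g x) = x) →
      ((∀ γ ∈ Γ n, ∀ x ∈ cyl Γ hdec n a, f (tau Γ hdec γ * x) = tau Γ hdec γ * f x) ↔
        ∃ ξ : ↥(Odo Γ hdec), (ξ : ∀ k, G ⧸ Γ k) n = 1 ∧ ∀ x ∈ cyl Γ hdec n a, f x = x * ξ⁻¹) := by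
  intro f g hfc _hgc hfm _hgm _hgf _hfg
  obtain ⟨b, rfl⟩ := QuotientGroup.mk_surjective a
  constructor
  · -- forward direction
    intro hcomm
    set x₀ : Odo Γ hdec := tau Γ hdec b with hx₀def
    have hx₀ : x₀ ∈ cyl Γ hdec n (QuotientGroup.mk b) := rfl
    have hfx₀ : f x₀ ∈ cyl Γ hdec n (QuotientGroup.mk b) := hfm hx₀
    refine ⟨(f x₀)⁻¹ * x₀, ?_, ?_⟩
    · rw [odo_coe_mul, odo_coe_inv, hfx₀]
      have : (x₀ : ∀ m, G ⧸ Γ m) n = QuotientGroup.mk b := hx₀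
      rw [this, inv_mul_cancel]
    · -- f x = x * ((f x₀)⁻¹ * x₀)⁻¹ = x * (x₀⁻¹ * f x₀)
      have hξinv : ((f x₀)⁻¹ * x₀)⁻¹ = x₀⁻¹ * f x₀ := by
        rw [mul_inv_rev, inv_inv]
      -- the orbit of x₀ under τ(Γ n)
      set D : Set ↥(Odo Γ hdec) := {y | ∃ γ ∈ Γ n, y = tau Γ hdec γ * x₀} with hDdef
      have hDsub : D ⊆ cyl Γ hdec n (QuotientGroup.mk b) := by
        rintro y ⟨γ, hγ, rfl⟩
        exact mem_cyl_tau_mul Γ hdec hγ hx₀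
      -- agreement on the orbit
      have hagree : ∀ y ∈ D, f y = y * (x₀⁻¹ * f x₀) := by
        rintro y ⟨γ, hγ, rfl⟩
        rw [hcomm γ hγ x₀ hx₀, mul_assoc, mul_inv_cancel_left]
      -- density of the orbit in the cylinder
      have hdense : ∀ x ∈ cyl Γ hdec n (QuotientGroup.mk b), x ∈ closure D := by
        intro x hx
        have hc : ∀ m : ℕ, ∃ c : G,
            (x : ∀ k, G ⧸ Γ k) (max n m) = QuotientGroup.mk c := fun m =>
          ⟨(QuotientGroup.mk_surjective ((x : ∀ k, G ⧸ Γ k) (max n m))).choose,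
            ((QuotientGroup.mk_surjective ((x : ∀ k, G ⧸ Γ k) (max n m))).choose_spec).symm⟩
        choose c hcspec using hc
        have hγmem : ∀ m, c m * b⁻¹ ∈ Γ n := by
          intro m
          have h1 : (x : ∀ k, G ⧸ Γ k) n = QuotientGroup.mk (c m) :=
            odo_coe_le Γ hdec x (c m) (le_max_left n m) (hcspec m)
          have h2 : (QuotientGroup.mk (c m) : G ⧸ Γ n) = QuotientGroup.mk b := by
            rw [← h1]; exact hx
          have h3 : b⁻¹ * c m ∈ Γ n := by
            rw [QuotientGroup.eq] at h2
            simpa using (Γ n).inv_mem h2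
          have h4 : c m * b⁻¹ = b * (b⁻¹ * c m) * b⁻¹ := by group
          rw [h4]
          exact (inferInstance : (Γ n).Normal).conj_mem _ h3 b
        set y : ℕ → ↥(Odo Γ hdec) := fun m => tau Γ hdec (c m * b⁻¹) * x₀ with hydef
        have hyD : ∀ m, y m ∈ D := fun m => ⟨c m * b⁻¹, hγmem m, rfl⟩
        have hyk : ∀ k m : ℕ, k ≤ m → (y m : ∀ j, G ⧸ Γ j) k = (x : ∀ j, G ⧸ Γ j) k := by
          intro k m hkm
          have hx₀k : (x₀ : ∀ j, G ⧸ Γ j) k = QuotientGroup.mk b := rfl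
          have h1 : (y m : ∀ j, G ⧸ Γ j) k = QuotientGroup.mk (c m * b⁻¹ * b) := by
            rw [hydef, odo_coe_mul, tau_coe, hx₀k, ← QuotientGroup.mk_mul]
          rw [h1, inv_mul_cancel_right]
          exact (odo_coe_le Γ hdec x (c m) (le_trans hkm (le_max_right n m))
            (hcspec m)).symm
        have hy : Filter.Tendsto y Filter.atTop (nhds x) := by
          rw [tendsto_subtype_rng, tendsto_pi_nhds]
          intro k
          apply Filter.Tendsto.congr' (f₁ := fun _ => (x : ∀ j, G ⧸ Γ j) k)
          · filter_upwards [Filter.eventually_atTop.mpr ⟨k, fun m hm => (hyk k m hm).symm⟩]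
              with m hm using hm
          · exact tendsto_const_nhds
        exact mem_closure_of_tendsto hy (Filter.Eventually.of_forall hyD)
      -- conclude by uniqueness of limits
      intro x hx
      have hNe : (nhdsWithin x D).NeBot :=
        mem_closure_iff_nhdsWithin_neBot.mp (hdense x hx)
      have h1 : Filter.Tendsto f (nhdsWithin x D) (nhds (f x)) :=
        (hfc x hx).mono_left (nhdsWithin_mono x hDsub)
      have h2 : Filter.Tendsto (fun y : ↥(Odo Γ hdec) => y * (x₀⁻¹ * f x₀))
          (nhdsWithin x D) (nhds (x * (x₀⁻¹ * f x₀))) :=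
        ((odo_rightMul_continuous Γ hdec (x₀⁻¹ * f x₀)).tendsto x).mono_left
          nhdsWithin_le_nhds
      have h3 : Filter.Tendsto f (nhdsWithin x D) (nhds (x * (x₀⁻¹ * f x₀))) := by
        refine h2.congr' ?_
        filter_upwards [self_mem_nhdsWithin] with y hy using (hagree y hy).symm
      rw [hξinv]
      exact tendsto_nhds_unique h1 h3
  · -- backward direction
    rintro ⟨ξ, _hξn, hξ⟩ γ hγ x hx
    have hmem : tau Γ hdec γ * x ∈ cyl Γ hdec n (QuotientGroup.mk b) :=
      mem_cyl_tau_mul Γ hdec hγ hx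
    rw [hξ _ hmem, hξ x hx, mul_assoc]

end OdoPaper
end
end

section
/- Let G be an infinite residually finite group with scale (Γ_n) and X the odometer. For every n, the automorphism group Aut(X, Γ_n)_L of the left Γ_n-action on X equals [[X]]_{n,R}, the set of homeomorphisms which on each cylinder of level n act as right multiplication by some element of X; moreover Aut(X, Γ_n)_L is isomorphic to the semidirect product X_n^{G/Γ_n} ⋊ Sym(G/Γ_n), where X_n is the clopen subgroup [1]_n of X. -/
open scoped Pointwise

noncomputable section
namespace OdoPaper


variable {G : Type*} [Group G]

section Stmt15Aux

variable {G : Type*} [Group G] (Γ : ℕ → Subgroup G) [∀ n, (Γ n).Normal]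
  (hdec : ∀ n, Γ (n + 1) ≤ Γ n)

instance quotTopGrp (Γ' : Subgroup G) [Γ'.Normal] : IsTopologicalGroup (G ⧸ Γ') where
  continuous_mul := continuous_of_discreteTopology
  continuous_inv := continuous_of_discreteTopology

lemma coe_mul_apply (x y : ↥(Odo Γ hdec)) (k : ℕ) :
    ((x * y : ↥(Odo Γ hdec)) : ∀ j, G ⧸ Γ j) k
      = (x : ∀ j, G ⧸ Γ j) k * (y : ∀ j, G ⧸ Γ j) k := rfl

lemma coe_inv_apply (x : ↥(Odo Γ hdec)) (k : ℕ) :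
    ((x⁻¹ : ↥(Odo Γ hdec)) : ∀ j, G ⧸ Γ j) k = ((x : ∀ j, G ⧸ Γ j) k)⁻¹ := rfl

lemma tau_apply (g : G) (k : ℕ) :
    ((tau Γ hdec g : ↥(Odo Γ hdec)) : ∀ j, G ⧸ Γ j) k = QuotientGroup.mk g := rfl

lemma odo_compat (x : ↥(Odo Γ hdec)) (k : ℕ) :
    odoMap Γ hdec k ((x : ∀ j, G ⧸ Γ j) (k + 1)) = (x : ∀ j, G ⧸ Γ j) k := x.2 k

lemma agree_down (x y : ↥(Odo Γ hdec)) {k m : ℕ} (hkm : k ≤ m)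
    (h : (x : ∀ j, G ⧸ Γ j) m = (y : ∀ j, G ⧸ Γ j) m) :
    (x : ∀ j, G ⧸ Γ j) k = (y : ∀ j, G ⧸ Γ j) k := by
  induction m with
  | zero => exact (Nat.le_zero.mp hkm) ▸ h
  | succ m ih =>
    rcases Nat.lt_or_ge k (m + 1) with hk | hk
    · exact ih (Nat.lt_succ_iff.mp hk)
        (by rw [← odo_compat Γ hdec x m, ← odo_compat Γ hdec y m, h])
    · exact (Nat.le_antisymm hkm hk) ▸ h

/-- A canonical point in each level-`n` cylinder. -/
def secat (n : ℕ) (a : G ⧸ Γ n) : ↥(Odo Γ hdec) := tau Γ hdec (Quotient.out a)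

lemma secat_apply (n : ℕ) (a : G ⧸ Γ n) :
    ((secat Γ hdec n a : ↥(Odo Γ hdec)) : ∀ j, G ⧸ Γ j) n = a := QuotientGroup.out_eq' a

lemma proj_cont (k : ℕ) : Continuous (fun x : ↥(Odo Γ hdec) => (x : ∀ j, G ⧸ Γ j) k) :=
  (continuous_apply k).comp continuous_subtype_val

/-- `τ(Γ n)` is dense in the level-`n` kernel. -/
lemma dense_ker (n : ℕ) (z : ↥(Odo Γ hdec)) (hz : (z : ∀ j, G ⧸ Γ j) n = 1) :
    z ∈ closure (tau Γ hdec '' ((Γ n : Subgroup G) : Set G)) := by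
  set g : ℕ → G := fun m => Quotient.out ((z : ∀ j, G ⧸ Γ j) (n + m)) with hgdef
  have hg : ∀ m, ((tau Γ hdec (g m) : ↥(Odo Γ hdec)) : ∀ j, G ⧸ Γ j) (n + m)
      = (z : ∀ j, G ⧸ Γ j) (n + m) := fun m => QuotientGroup.out_eq' _
  have hmem : ∀ m, g m ∈ Γ n := by
    intro m
    have h := agree_down Γ hdec (tau Γ hdec (g m)) z (Nat.le_add_right n m) (hg m)
    rw [tau_apply, hz] at h
    exact (QuotientGroup.eq_one_iff _).mp h
  refine mem_closure_of_tendsto (f := fun m => tau Γ hdec (g m)) (b := Filter.atTop) ?_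
    (Filter.Eventually.of_forall fun m => ⟨g m, hmem m, rfl⟩)
  rw [tendsto_subtype_rng, tendsto_pi_nhds]
  intro k
  apply tendsto_nhds_of_eventually_eq
  filter_upwards [Filter.eventually_ge_atTop k] with m hm
  exact agree_down Γ hdec _ z (hm.trans (Nat.le_add_left m n)) (hg m)

/-- The cocycle `x ↦ x⁻¹ f x` is constant on level-`n` cylinders. -/
lemma autL_const (n : ℕ) {f : ↥(Odo Γ hdec) ≃ₜ ↥(Odo Γ hdec)}
    (hf : IsAutLOn ↥(Odo Γ hdec) (tau Γ hdec '' ((Γ n : Subgroup G) : Set G)) f)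
    {x y : ↥(Odo Γ hdec)} (h : (x : ∀ j, G ⧸ Γ j) n = (y : ∀ j, G ⧸ Γ j) n) :
    x⁻¹ * f x = y⁻¹ * f y := by
  have hz : ((y * x⁻¹ : ↥(Odo Γ hdec)) : ∀ j, G ⧸ Γ j) n = 1 := by
    rw [coe_mul_apply, coe_inv_apply, ← h, mul_inv_cancel]
  have heq : Set.EqOn (fun w : ↥(Odo Γ hdec) => (w * x)⁻¹ * f (w * x))
      (fun _ => x⁻¹ * f x) (closure (tau Γ hdec '' ((Γ n : Subgroup G) : Set G))) := by
    refine Set.EqOn.closure ?_ ?_ continuous_const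
    · rintro w ⟨γ, hγ, rfl⟩
      have := hf (tau Γ hdec γ) ⟨γ, hγ, rfl⟩ x
      simp only [this, mul_inv_rev]
      group
    · exact ((continuous_id.mul continuous_const).inv).mul
        (f.continuous.comp (continuous_id.mul continuous_const))
  have := heq (dense_ker Γ hdec n (y * x⁻¹) hz)
  simpa [inv_mul_cancel_right] using this.symm

/-- Statement 15, first half. -/
lemma part1 (n : ℕ) (f : ↥(Odo Γ hdec) ≃ₜ ↥(Odo Γ hdec)) :
    IsAutLOn ↥(Odo Γ hdec) (tau Γ hdec '' ((Γ n : Subgroup G) : Set G)) f ↔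
      ∀ a : G ⧸ Γ n, ∃ ξ : ↥(Odo Γ hdec),
        ∀ x : ↥(Odo Γ hdec), (x : ∀ k, G ⧸ Γ k) n = a → f x = x * ξ⁻¹ := by
  constructor
  · intro hf a
    refine ⟨(f (secat Γ hdec n a))⁻¹ * secat Γ hdec n a, fun x hx => ?_⟩
    have h := autL_const Γ hdec n hf (x := x) (y := secat Γ hdec n a)
      (hx.trans (secat_apply Γ hdec n a).symm)
    rw [mul_inv_rev, inv_inv, ← h, mul_inv_cancel_left]
  · rintro h s ⟨γ, hγ, rfl⟩ x
    obtain ⟨ξ, hξ⟩ := h ((x : ∀ j, G ⧸ Γ j) n)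
    have h1 : ((tau Γ hdec γ * x : ↥(Odo Γ hdec)) : ∀ j, G ⧸ Γ j) n
        = (x : ∀ j, G ⧸ Γ j) n := by
      rw [coe_mul_apply, tau_apply, (QuotientGroup.eq_one_iff γ).mpr hγ, one_mul]
    rw [hξ x rfl, hξ _ h1, mul_assoc]

end Stmt15Aux

section Stmt15Aux2

variable {G : Type*} [Group G] (Γ : ℕ → Subgroup G) [∀ n, (Γ n).Normal]
  (hdec : ∀ n, Γ (n + 1) ≤ Γ n) (n : ℕ)

lemma mem_levelKer_iff (z : ↥(Odo Γ hdec)) :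
    z ∈ levelKer Γ hdec n ↔ (z : ∀ j, G ⧸ Γ j) n = 1 := Iff.rfl

/-- The translation element of `f` on the cylinder of `a`. -/
def xiOf (f : ↥(Odo Γ hdec) ≃ₜ ↥(Odo Γ hdec)) (a : G ⧸ Γ n) : ↥(Odo Γ hdec) :=
  (f (secat Γ hdec n a))⁻¹ * secat Γ hdec n a

lemma xiOf_spec {f : ↥(Odo Γ hdec) ≃ₜ ↥(Odo Γ hdec)}
    (hf : IsAutLOn ↥(Odo Γ hdec) (tau Γ hdec '' ((Γ n : Subgroup G) : Set G)) f)
    (x : ↥(Odo Γ hdec)) :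
    f x = x * (xiOf Γ hdec n f ((x : ∀ j, G ⧸ Γ j) n))⁻¹ := by
  have h := autL_const Γ hdec n hf (x := x) (y := secat Γ hdec n ((x : ∀ j, G ⧸ Γ j) n))
    ((secat_apply Γ hdec n _).symm)
  rw [xiOf, mul_inv_rev, inv_inv, ← h, mul_inv_cancel_left]

/-- The induced map on level-`n` cosets. -/
def sigmaFun (f : ↥(Odo Γ hdec) ≃ₜ ↥(Odo Γ hdec)) (a : G ⧸ Γ n) : G ⧸ Γ n :=
  ((f (secat Γ hdec n a) : ↥(Odo Γ hdec)) : ∀ j, G ⧸ Γ j) n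

lemma xiOf_coord (f : ↥(Odo Γ hdec) ≃ₜ ↥(Odo Γ hdec)) (a : G ⧸ Γ n) :
    ((xiOf Γ hdec n f a : ↥(Odo Γ hdec)) : ∀ j, G ⧸ Γ j) n
      = (sigmaFun Γ hdec n f a)⁻¹ * a := by
  rw [xiOf, coe_mul_apply, coe_inv_apply, secat_apply]; rfl

lemma apply_coord {f : ↥(Odo Γ hdec) ≃ₜ ↥(Odo Γ hdec)}
    (hf : IsAutLOn ↥(Odo Γ hdec) (tau Γ hdec '' ((Γ n : Subgroup G) : Set G)) f)
    (x : ↥(Odo Γ hdec)) :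
    ((f x : ↥(Odo Γ hdec)) : ∀ j, G ⧸ Γ j) n = sigmaFun Γ hdec n f ((x : ∀ j, G ⧸ Γ j) n) := by
  conv_lhs => rw [xiOf_spec Γ hdec n hf x]
  rw [coe_mul_apply, coe_inv_apply, xiOf_coord]
  group

lemma sigma_inj {f : ↥(Odo Γ hdec) ≃ₜ ↥(Odo Γ hdec)}
    (hf : IsAutLOn ↥(Odo Γ hdec) (tau Γ hdec '' ((Γ n : Subgroup G) : Set G)) f) :
    Function.Injective (sigmaFun Γ hdec n f) := by
  intro a b hab
  have hinv := IsAutLOn.inv _ hf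
  have h := autL_const Γ hdec n hinv
    (x := f (secat Γ hdec n a)) (y := f (secat Γ hdec n b)) hab
  rw [homeo_inv_apply, homeo_inv_apply, Homeomorph.symm_apply_apply,
    Homeomorph.symm_apply_apply] at h
  have h2 := congrArg (fun z : ↥(Odo Γ hdec) => (z : ∀ j, G ⧸ Γ j) n) h
  simp only [coe_mul_apply, coe_inv_apply, secat_apply] at h2
  have h3 : (sigmaFun Γ hdec n f a)⁻¹ * a = (sigmaFun Γ hdec n f b)⁻¹ * b := h2
  rw [hab] at h3
  exact mul_left_cancel h3

/-- The untwisted permutation action of `Sym(G/Γₙ)` on `Xₙ^{G/Γₙ}`. -/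
def permHom : Equiv.Perm (G ⧸ Γ n) →* MulAut ((G ⧸ Γ n) → ↥(levelKer Γ hdec n)) where
  toFun σ :=
    { toFun := fun c => c ∘ σ.symm
      invFun := fun c => c ∘ σ
      left_inv := fun c => funext fun a => by simp
      right_inv := fun c => funext fun a => by simp
      map_mul' := fun c d => rfl }
  map_one' := rfl
  map_mul' σ τ := rfl

variable [∀ k, (Γ k).FiniteIndex]

/-- The permutation of level-`n` cosets induced by an automorphism. -/
def sigmaPerm
    (f : ↥(AutLgrp ↥(Odo Γ hdec) (tau Γ hdec '' ((Γ n : Subgroup G) : Set G)))) :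
    Equiv.Perm (G ⧸ Γ n) :=
  Equiv.ofBijective (sigmaFun Γ hdec n ↑f)
    ((Finite.injective_iff_bijective).mp (sigma_inj Γ hdec n f.2))

lemma sigmaPerm_apply
    (f : ↥(AutLgrp ↥(Odo Γ hdec) (tau Γ hdec '' ((Γ n : Subgroup G) : Set G))))
    (a : G ⧸ Γ n) : sigmaPerm Γ hdec n f a = sigmaFun Γ hdec n ↑f a := rfl

/-- The `Xₙ`-valued cocycle of an automorphism. -/
def cOf (f : ↥(AutLgrp ↥(Odo Γ hdec) (tau Γ hdec '' ((Γ n : Subgroup G) : Set G))))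
    (a : G ⧸ Γ n) : ↥(levelKer Γ hdec n) :=
  ⟨secat Γ hdec n a * xiOf Γ hdec n ↑f ((sigmaPerm Γ hdec n f).symm a) *
      (secat Γ hdec n ((sigmaPerm Γ hdec n f).symm a))⁻¹, by
    rw [mem_levelKer_iff, coe_mul_apply, coe_mul_apply, coe_inv_apply, secat_apply,
      secat_apply, xiOf_coord]
    have h : sigmaFun Γ hdec n (↑f) ((sigmaPerm Γ hdec n f).symm a) = a :=
      (sigmaPerm Γ hdec n f).apply_symm_apply a
    rw [h]
    group⟩

end Stmt15Aux2

section Stmt15Aux3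

variable {G : Type*} [Group G] (Γ : ℕ → Subgroup G) [∀ n, (Γ n).Normal]
  (hdec : ∀ n, Γ (n + 1) ≤ Γ n) (n : ℕ)

/-- The translation data associated to an element of the semidirect product. -/
def bigXi (p : ((G ⧸ Γ n) → ↥(levelKer Γ hdec n)) ⋊[permHom Γ hdec n] Equiv.Perm (G ⧸ Γ n))
    (b : G ⧸ Γ n) : ↥(Odo Γ hdec) :=
  (secat Γ hdec n (p.right b))⁻¹ * ↑(p.left (p.right b)) * secat Γ hdec n b

lemma bigXi_coord (p : ((G ⧸ Γ n) → ↥(levelKer Γ hdec n)) ⋊[permHom Γ hdec n]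
    Equiv.Perm (G ⧸ Γ n)) (b : G ⧸ Γ n) :
    ((bigXi Γ hdec n p b : ↥(Odo Γ hdec)) : ∀ j, G ⧸ Γ j) n = (p.right b)⁻¹ * b := by
  have h := ((mem_levelKer_iff Γ hdec n _).mp (p.left (p.right b)).2)
  rw [bigXi, coe_mul_apply, coe_mul_apply, coe_inv_apply, secat_apply, secat_apply, h,
    mul_one]

/-- The homeomorphism associated to an element of the semidirect product. -/
def psiHomeo (p : ((G ⧸ Γ n) → ↥(levelKer Γ hdec n)) ⋊[permHom Γ hdec n]
    Equiv.Perm (G ⧸ Γ n)) : ↥(Odo Γ hdec) ≃ₜ ↥(Odo Γ hdec) where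
  toFun x := x * (bigXi Γ hdec n p ((x : ∀ j, G ⧸ Γ j) n))⁻¹
  invFun y := y * bigXi Γ hdec n p (p.right.symm ((y : ∀ j, G ⧸ Γ j) n))
  left_inv x := by
    have hb : ((x * (bigXi Γ hdec n p ((x : ∀ j, G ⧸ Γ j) n))⁻¹ : ↥(Odo Γ hdec)) :
        ∀ j, G ⧸ Γ j) n = p.right ((x : ∀ j, G ⧸ Γ j) n) := by
      rw [coe_mul_apply, coe_inv_apply, bigXi_coord]
      group
    simp only [hb, Equiv.symm_apply_apply]
    exact inv_mul_cancel_right _ _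
  right_inv y := by
    have hb : ((y * bigXi Γ hdec n p (p.right.symm ((y : ∀ j, G ⧸ Γ j) n)) :
        ↥(Odo Γ hdec)) : ∀ j, G ⧸ Γ j) n = p.right.symm ((y : ∀ j, G ⧸ Γ j) n) := by
      rw [coe_mul_apply, bigXi_coord, Equiv.apply_symm_apply]
      group
    simp only [hb]
    exact mul_inv_cancel_right _ _
  continuous_toFun := continuous_id.mul
    ((continuous_of_discreteTopology
      (f := fun b : G ⧸ Γ n => (bigXi Γ hdec n p b)⁻¹)).comp (proj_cont Γ hdec n))
  continuous_invFun := continuous_id.mul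
    ((continuous_of_discreteTopology
      (f := fun b : G ⧸ Γ n => bigXi Γ hdec n p (p.right.symm b))).comp (proj_cont Γ hdec n))

lemma psiHomeo_apply (p : ((G ⧸ Γ n) → ↥(levelKer Γ hdec n)) ⋊[permHom Γ hdec n]
    Equiv.Perm (G ⧸ Γ n)) (x : ↥(Odo Γ hdec)) :
    psiHomeo Γ hdec n p x = x * (bigXi Γ hdec n p ((x : ∀ j, G ⧸ Γ j) n))⁻¹ := rfl

lemma psiHomeo_mem (p : ((G ⧸ Γ n) → ↥(levelKer Γ hdec n)) ⋊[permHom Γ hdec n]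
    Equiv.Perm (G ⧸ Γ n)) :
    psiHomeo Γ hdec n p ∈ AutLgrp ↥(Odo Γ hdec) (tau Γ hdec '' ((Γ n : Subgroup G) : Set G)) :=
  (part1 Γ hdec n _).mpr fun a => ⟨bigXi Γ hdec n p a, fun x hx => by
    rw [psiHomeo_apply, hx]⟩

variable [∀ k, (Γ k).FiniteIndex]

/-- The inverse map of the isomorphism of Statement 15. -/
def psiFull (p : ((G ⧸ Γ n) → ↥(levelKer Γ hdec n)) ⋊[permHom Γ hdec n]
    Equiv.Perm (G ⧸ Γ n)) :
    ↥(AutLgrp ↥(Odo Γ hdec) (tau Γ hdec '' ((Γ n : Subgroup G) : Set G))) :=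
  ⟨psiHomeo Γ hdec n p, psiHomeo_mem Γ hdec n p⟩

/-- The forward map of the isomorphism of Statement 15. -/
def phiFull (f : ↥(AutLgrp ↥(Odo Γ hdec) (tau Γ hdec '' ((Γ n : Subgroup G) : Set G)))) :
    ((G ⧸ Γ n) → ↥(levelKer Γ hdec n)) ⋊[permHom Γ hdec n] Equiv.Perm (G ⧸ Γ n) :=
  ⟨cOf Γ hdec n f, sigmaPerm Γ hdec n f⟩

lemma xiOf_mul (f g : ↥(AutLgrp ↥(Odo Γ hdec) (tau Γ hdec '' ((Γ n : Subgroup G) : Set G))))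
    (b : G ⧸ Γ n) :
    xiOf Γ hdec n ↑(f * g) b
      = xiOf Γ hdec n ↑f (sigmaPerm Γ hdec n g b) * xiOf Γ hdec n ↑g b := by
  have h1 : (↑(f * g) : ↥(Odo Γ hdec) ≃ₜ ↥(Odo Γ hdec)) (secat Γ hdec n b)
      = (↑f : ↥(Odo Γ hdec) ≃ₜ ↥(Odo Γ hdec))
          ((↑g : ↥(Odo Γ hdec) ≃ₜ ↥(Odo Γ hdec)) (secat Γ hdec n b)) := rfl
  have h2 : (↑g : ↥(Odo Γ hdec) ≃ₜ ↥(Odo Γ hdec)) (secat Γ hdec n b)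
      = secat Γ hdec n b * (xiOf Γ hdec n ↑g b)⁻¹ := by
    conv_lhs => rw [xiOf_spec Γ hdec n g.2 (secat Γ hdec n b)]
    rw [secat_apply]
  have h3 : ((((↑g : ↥(Odo Γ hdec) ≃ₜ ↥(Odo Γ hdec)) (secat Γ hdec n b)) : ↥(Odo Γ hdec)) :
      ∀ j, G ⧸ Γ j) n = sigmaPerm Γ hdec n g b := by
    rw [apply_coord Γ hdec n g.2, secat_apply]; rfl
  show (((f * g : _) : ↥(Odo Γ hdec) ≃ₜ ↥(Odo Γ hdec)) (secat Γ hdec n b))⁻¹ *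
      secat Γ hdec n b = _
  rw [h1, xiOf_spec Γ hdec n f.2, h3, h2]
  group

end Stmt15Aux3

section Stmt15Aux4

variable {G : Type*} [Group G] (Γ : ℕ → Subgroup G) [∀ n, (Γ n).Normal]
  (hdec : ∀ n, Γ (n + 1) ≤ Γ n) (n : ℕ) [∀ k, (Γ k).FiniteIndex]

lemma psi_phi (f : ↥(AutLgrp ↥(Odo Γ hdec) (tau Γ hdec '' ((Γ n : Subgroup G) : Set G)))) :
    psiFull Γ hdec n (phiFull Γ hdec n f) = f := by
  have hξ : ∀ b, bigXi Γ hdec n (phiFull Γ hdec n f) b = xiOf Γ hdec n ↑f b := by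
    intro b
    show (secat Γ hdec n (sigmaPerm Γ hdec n f b))⁻¹ *
        ↑(cOf Γ hdec n f (sigmaPerm Γ hdec n f b)) * secat Γ hdec n b = _
    show (secat Γ hdec n (sigmaPerm Γ hdec n f b))⁻¹ *
        (secat Γ hdec n (sigmaPerm Γ hdec n f b) *
          xiOf Γ hdec n ↑f ((sigmaPerm Γ hdec n f).symm (sigmaPerm Γ hdec n f b)) *
          (secat Γ hdec n ((sigmaPerm Γ hdec n f).symm (sigmaPerm Γ hdec n f b)))⁻¹) *
        secat Γ hdec n b = _
    rw [Equiv.symm_apply_apply]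
    group
  apply Subtype.ext
  apply Homeomorph.ext
  intro x
  show psiHomeo Γ hdec n (phiFull Γ hdec n f) x = (↑f : _ ≃ₜ _) x
  rw [psiHomeo_apply, hξ, ← xiOf_spec Γ hdec n f.2 x]

lemma phi_psi (p : ((G ⧸ Γ n) → ↥(levelKer Γ hdec n)) ⋊[permHom Γ hdec n]
    Equiv.Perm (G ⧸ Γ n)) :
    phiFull Γ hdec n (psiFull Γ hdec n p) = p := by
  have hσ : sigmaPerm Γ hdec n (psiFull Γ hdec n p) = p.right := by
    apply Equiv.ext
    intro a
    show ((psiHomeo Γ hdec n p (secat Γ hdec n a) : ↥(Odo Γ hdec)) : ∀ j, G ⧸ Γ j) n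
      = p.right a
    rw [psiHomeo_apply, secat_apply, coe_mul_apply, coe_inv_apply, bigXi_coord,
      secat_apply]
    group
  have hx : ∀ b, xiOf Γ hdec n ↑(psiFull Γ hdec n p) b = bigXi Γ hdec n p b := by
    intro b
    show (psiHomeo Γ hdec n p (secat Γ hdec n b))⁻¹ * secat Γ hdec n b = _
    rw [psiHomeo_apply, secat_apply]
    group
  refine SemidirectProduct.ext ?_ hσ
  funext a
  apply Subtype.ext
  show secat Γ hdec n a *
      xiOf Γ hdec n ↑(psiFull Γ hdec n p) ((sigmaPerm Γ hdec n (psiFull Γ hdec n p)).symm a) *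
      (secat Γ hdec n ((sigmaPerm Γ hdec n (psiFull Γ hdec n p)).symm a))⁻¹ = ↑(p.left a)
  rw [hσ, hx]
  rw [bigXi]
  rw [Equiv.apply_symm_apply]
  group

lemma phi_mul (f g : ↥(AutLgrp ↥(Odo Γ hdec) (tau Γ hdec '' ((Γ n : Subgroup G) : Set G)))) :
    phiFull Γ hdec n (f * g) = phiFull Γ hdec n f * phiFull Γ hdec n g := by
  have hσ : sigmaPerm Γ hdec n (f * g) = sigmaPerm Γ hdec n f * sigmaPerm Γ hdec n g := by
    apply Equiv.ext
    intro a
    show ((((f * g : _) : ↥(Odo Γ hdec) ≃ₜ ↥(Odo Γ hdec)) (secat Γ hdec n a) :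
        ↥(Odo Γ hdec)) : ∀ j, G ⧸ Γ j) n = _
    have h1 : (((f * g : _) : ↥(Odo Γ hdec) ≃ₜ ↥(Odo Γ hdec)) (secat Γ hdec n a))
        = (↑f : ↥(Odo Γ hdec) ≃ₜ ↥(Odo Γ hdec))
            ((↑g : ↥(Odo Γ hdec) ≃ₜ ↥(Odo Γ hdec)) (secat Γ hdec n a)) := rfl
    rw [h1, apply_coord Γ hdec n f.2, apply_coord Γ hdec n g.2, secat_apply]
    rfl
  refine SemidirectProduct.ext ?_ hσ
  funext a
  apply Subtype.ext
  have hB : (sigmaPerm Γ hdec n (f * g)).symm a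
      = (sigmaPerm Γ hdec n g).symm ((sigmaPerm Γ hdec n f).symm a) := by
    rw [hσ]; rfl
  have hA : sigmaPerm Γ hdec n g ((sigmaPerm Γ hdec n g).symm ((sigmaPerm Γ hdec n f).symm a))
      = (sigmaPerm Γ hdec n f).symm a := Equiv.apply_symm_apply _ _
  show secat Γ hdec n a *
      xiOf Γ hdec n ↑(f * g) ((sigmaPerm Γ hdec n (f * g)).symm a) *
      (secat Γ hdec n ((sigmaPerm Γ hdec n (f * g)).symm a))⁻¹
      = ↑(cOf Γ hdec n f a * cOf Γ hdec n g ((sigmaPerm Γ hdec n f).symm a))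
  rw [hB, xiOf_mul, hA, Subgroup.coe_mul]
  show _ = (secat Γ hdec n a * xiOf Γ hdec n ↑f ((sigmaPerm Γ hdec n f).symm a) *
      (secat Γ hdec n ((sigmaPerm Γ hdec n f).symm a))⁻¹) *
    (secat Γ hdec n ((sigmaPerm Γ hdec n f).symm a) *
      xiOf Γ hdec n ↑g ((sigmaPerm Γ hdec n g).symm ((sigmaPerm Γ hdec n f).symm a)) *
      (secat Γ hdec n ((sigmaPerm Γ hdec n g).symm ((sigmaPerm Γ hdec n f).symm a)))⁻¹)
  group

/-- The isomorphism of Statement 15. -/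
def stmt15Equiv :
    ↥(AutLgrp ↥(Odo Γ hdec) (tau Γ hdec '' ((Γ n : Subgroup G) : Set G))) ≃*
      (((G ⧸ Γ n) → ↥(levelKer Γ hdec n)) ⋊[permHom Γ hdec n] Equiv.Perm (G ⧸ Γ n)) :=
  MulEquiv.mk' ⟨phiFull Γ hdec n, psiFull Γ hdec n, psi_phi Γ hdec n, phi_psi Γ hdec n⟩
    (phi_mul Γ hdec n)

end Stmt15Aux4

/-- `Aut(X,Γₙ)_L = [[X]]_{n,R}`, and it is isomorphic to a semidirect
product `Xₙ^(G/Γₙ) ⋊ Sym(G/Γₙ)`. -/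
theorem stmt15 {G : Type*} [Group G] (Γ : ℕ → Subgroup G) [∀ n, (Γ n).Normal]
    [∀ n, (Γ n).FiniteIndex] (hdec : ∀ n, Γ (n + 1) ≤ Γ n)
    (htriv : ∀ g : G, (∀ n, g ∈ Γ n) → g = 1) [Infinite G] (n : ℕ) :
    (∀ f : ↥(Odo Γ hdec) ≃ₜ ↥(Odo Γ hdec),
        IsAutLOn ↥(Odo Γ hdec) (tau Γ hdec '' ((Γ n : Subgroup G) : Set G)) f ↔
          ∀ a : G ⧸ Γ n, ∃ ξ : ↥(Odo Γ hdec),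
            ∀ x : ↥(Odo Γ hdec), (x : ∀ k, G ⧸ Γ k) n = a → f x = x * ξ⁻¹) ∧
    ∃ φ : Equiv.Perm (G ⧸ Γ n) →* MulAut ((G ⧸ Γ n) → ↥(levelKer Γ hdec n)),
      Nonempty (↥(AutLgrp ↥(Odo Γ hdec) (tau Γ hdec '' ((Γ n : Subgroup G) : Set G))) ≃*
        (((G ⧸ Γ n) → ↥(levelKer Γ hdec n)) ⋊[φ] Equiv.Perm (G ⧸ Γ n))) :=
  ⟨part1 Γ hdec n, permHom Γ hdec n, ⟨stmt15Equiv Γ hdec n⟩⟩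

end OdoPaper
end
end

section
/- Let G be an infinite residually finite group with scale (Γ_n) and X the odometer. For every finite-index subgroup H ≤ G, there exists n ∈ ℕ such that ⟨H, Γ_k⟩ = ⟨H, Γ_n⟩ for all k ≥ n, and moreover Aut(X, H)_L = Aut(X, ⟨H, Γ_n⟩)_L ⊆ Aut(X, Γ_n)_L. -/
open scoped Pointwise

noncomputable section
namespace OdoPaper


variable {G : Type*} [Group G]

/-- for every finite-index `H ≤ G` the subgroups `⟨H,Γₖ⟩` stabilize at some
`n`, and `Aut(X,H)_L = Aut(X,⟨H,Γₙ⟩)_L ⊆ Aut(X,Γₙ)_L`. -/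
theorem stmt16 {G : Type*} [Group G] (Γ : ℕ → Subgroup G) [∀ n, (Γ n).Normal]
    [∀ n, (Γ n).FiniteIndex] (hdec : ∀ n, Γ (n + 1) ≤ Γ n)
    (htriv : ∀ g : G, (∀ n, g ∈ Γ n) → g = 1) [Infinite G] (H : Subgroup G) (hH : H.FiniteIndex) :
    ∃ n : ℕ, (∀ k, n ≤ k → H ⊔ Γ k = H ⊔ Γ n) ∧
      (∀ f : ↥(Odo Γ hdec) ≃ₜ ↥(Odo Γ hdec),
        IsAutLOn ↥(Odo Γ hdec) (tau Γ hdec '' ((H : Subgroup G) : Set G)) f ↔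
          IsAutLOn ↥(Odo Γ hdec) (tau Γ hdec '' ((H ⊔ Γ n : Subgroup G) : Set G)) f) ∧
      (∀ f : ↥(Odo Γ hdec) ≃ₜ ↥(Odo Γ hdec),
        IsAutLOn ↥(Odo Γ hdec) (tau Γ hdec '' ((H ⊔ Γ n : Subgroup G) : Set G)) f →
          IsAutLOn ↥(Odo Γ hdec) (tau Γ hdec '' ((Γ n : Subgroup G) : Set G)) f) := by
  classical
  haveI := hH
  have hanti : Antitone Γ := antitone_nat_of_succ_le hdec
  haveI hFI : ∀ k, (H ⊔ Γ k).FiniteIndex := fun k =>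
    Subgroup.finiteIndex_of_le le_sup_left
  -- the index sequence
  set a : ℕ → ℕ := fun k => (H ⊔ Γ k).index with ha
  have hbdd : ∀ k, a k ≤ H.index := fun k => Subgroup.index_antitone le_sup_left
  have hmem : sSup (Set.range a) ∈ Set.range a :=
    Nat.sSup_mem ⟨a 0, Set.mem_range_self 0⟩ ⟨H.index, fun _ ⟨k, hk⟩ => hk ▸ hbdd k⟩
  obtain ⟨n, hn⟩ := hmem
  have hmax : ∀ k, a k ≤ a n := fun k =>
    hn ▸ le_csSup ⟨H.index, fun _ ⟨k, hk⟩ => hk ▸ hbdd k⟩ (Set.mem_range_self k)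
  -- stabilization
  have hstab : ∀ k, n ≤ k → H ⊔ Γ k = H ⊔ Γ n := by
    intro k hk
    have hle : H ⊔ Γ k ≤ H ⊔ Γ n := sup_le_sup_left (hanti hk) H
    have hdvd : (H ⊔ Γ n).index ∣ (H ⊔ Γ k).index := Subgroup.index_dvd_of_le hle
    have hne : (H ⊔ Γ k).index ≠ 0 := (hFI k).index_ne_zero
    have heq : a k = a n :=
      le_antisymm (hmax k) (Nat.le_of_dvd (Nat.pos_of_ne_zero hne) hdvd)
    have hrel := Subgroup.relIndex_mul_index hle
    have h1 : (H ⊔ Γ k).relIndex (H ⊔ Γ n) = 1 := by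
      have hne' : (H ⊔ Γ n).index ≠ 0 := (hFI n).index_ne_zero
      have : (H ⊔ Γ k).relIndex (H ⊔ Γ n) * (H ⊔ Γ n).index =
          1 * (H ⊔ Γ n).index := by
        rw [hrel, one_mul]; exact heq
      exact Nat.eq_of_mul_eq_mul_right (Nat.pos_of_ne_zero hne') this
    exact le_antisymm hle (Subgroup.relIndex_eq_one.mp h1)
  refine ⟨n, hstab, ?_, ?_⟩
  · -- Aut(X,H) = Aut(X, H ⊔ Γ n)
    intro f
    constructor
    · intro hf
      -- the set of g commuting with f is a subgroup
      set K : Subgroup G :=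
        { carrier := {g | ∀ x, f (tau Γ hdec g * x) = tau Γ hdec g * f x}
          one_mem' := by intro x; simp only [map_one, one_mul]
          mul_mem' := by
            intro p q hp hq x
            rw [map_mul (tau Γ hdec), mul_assoc, hp, hq, mul_assoc]
          inv_mem' := by
            intro p hp x
            have h := hp ((tau Γ hdec p)⁻¹ * x)
            rw [mul_inv_cancel_left] at h
            rw [map_inv]
            exact (eq_inv_mul_iff_mul_eq.mpr h.symm) } with hK
      have hHK : H ≤ K := fun h hh x => hf _ ⟨h, hh, rfl⟩ x
      have hΓK : Γ n ≤ K := by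
        intro γ hγ x
        -- choose approximating elements h m ∈ H with γ = h m * u m, u m ∈ Γ (n + m)
        have hchoice : ∀ m : ℕ, ∃ h ∈ H, ∃ u ∈ Γ (n + m), h * u = γ := by
          intro m
          have hγ' : γ ∈ H ⊔ Γ (n + m) := by
            rw [hstab (n + m) (Nat.le_add_right n m)]
            exact (le_sup_right : Γ n ≤ H ⊔ Γ n) hγ
          have := (Subgroup.mul_normal H (Γ (n + m))) ▸
            (SetLike.mem_coe.mpr hγ' : γ ∈ ((H ⊔ Γ (n + m) : Subgroup G) : Set G))
          obtain ⟨p, hp, u, hu, huv⟩ := Set.mem_mul.mp this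
          exact ⟨p, hp, u, hu, huv⟩
        choose h hhH u huΓ huv using hchoice
        -- coordinatewise convergence of τ(h m) · y to τ(γ) · y
        have key : ∀ y : ↥(Odo Γ hdec),
            Filter.Tendsto (fun m => tau Γ hdec (h m) * y) Filter.atTop
              (nhds (tau Γ hdec γ * y)) := by
          intro y
          rw [tendsto_subtype_rng]
          rw [tendsto_pi_nhds]
          intro k
          apply tendsto_nhds_of_eventually_eq
          filter_upwards [Filter.eventually_ge_atTop k] with m hm
          have hcoset : (QuotientGroup.mk (h m) : G ⧸ Γ k) = QuotientGroup.mk γ := by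
            rw [QuotientGroup.eq]
            have : (h m)⁻¹ * γ = u m := by
              rw [← huv m]; group
            rw [this]
            exact hanti (le_trans hm (Nat.le_add_left m n)) (huΓ m)
          show ((tau Γ hdec (h m) * y : ↥(Odo Γ hdec)) : ∀ k, G ⧸ Γ k) k =
            ((tau Γ hdec γ * y : ↥(Odo Γ hdec)) : ∀ k, G ⧸ Γ k) k
          have e1 : ((tau Γ hdec (h m) * y : ↥(Odo Γ hdec)) : ∀ k, G ⧸ Γ k) k =
              (QuotientGroup.mk (h m) : G ⧸ Γ k) * (y : ∀ k, G ⧸ Γ k) k := rfl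
          have e2 : ((tau Γ hdec γ * y : ↥(Odo Γ hdec)) : ∀ k, G ⧸ Γ k) k =
              (QuotientGroup.mk γ : G ⧸ Γ k) * (y : ∀ k, G ⧸ Γ k) k := rfl
          rw [e1, e2, hcoset]
        have t1 : Filter.Tendsto (fun m => f (tau Γ hdec (h m) * x)) Filter.atTop
            (nhds (f (tau Γ hdec γ * x))) :=
          (f.continuous.tendsto _).comp (key x)
        have t2 : Filter.Tendsto (fun m => tau Γ hdec (h m) * f x) Filter.atTop
            (nhds (tau Γ hdec γ * f x)) := key (f x)
        have hcongr : (fun m => f (tau Γ hdec (h m) * x)) =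
            fun m => tau Γ hdec (h m) * f x := by
          funext m
          exact hHK (hhH m) x
        rw [hcongr] at t1
        exact tendsto_nhds_unique t1 t2
      have hsub : H ⊔ Γ n ≤ K := sup_le hHK hΓK
      rintro s ⟨g, hg, rfl⟩ x
      exact hsub hg x
    · intro hf s hs x
      exact hf s (Set.image_mono (fun g hg => (le_sup_left : H ≤ H ⊔ Γ n) hg) hs) x
  · -- restriction to Γ n
    intro f hf s hs x
    exact hf s (Set.image_mono (fun g hg => (le_sup_right : Γ n ≤ H ⊔ Γ n) hg) hs) x

end OdoPaper
end
end
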